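/- arXiv:1307.3462 — 5 statements merged into one kernel-verified Lean document; each statement's English description precedes it below -/
import Mathlib

section
/- Let E be a complex Banach space and let A be sectorial of angle θ ∈ (0,π) with constant K. Let φ ∈ (0,1), ρ > 0, y ∈ E, and set x := (1/2πi)∫_{Γ_{ρ,θ}} (−λ)^{−φ}(A+λ)^{-1}y dλ (so x = A^{−φ}y). Then for every θ' ∈ [0,θ) and every η ∈ [0,φ), sup_{z ∈ Λ_{θ'}} |z|^η ‖x − z(A+z)^{-1}x‖ < ∞; equivalently, z ↦ z^η A(A+z)^{-1}x is bounded on Λ_{θ'}, since A(A+z)^{-1}x = x − z(A+z)^{-1}x. -/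
open Complex MeasureTheory Real Set Filter

noncomputable section

variable {E : Type*} [NormedAddCommGroup E] [NormedSpace ℂ E] [CompleteSpace E]

/-- The sector `Λ_θ = {z : |arg z| ≤ θ}` (contains `0`). -/
def SectorSet (θ : ℝ) : Set ℂ := {z : ℂ | |z.arg| ≤ θ}

/-- `R` is the resolvent `(A + z)⁻¹` of the operator `A` (with domain `D`) at the point `z`. -/
def ResolventAt (D : Submodule ℂ E) (A : D →ₗ[ℂ] E) (R : E →L[ℂ] E) (z : ℂ) : Prop :=
  (∀ u : E, ∃ v : D, (v : E) = R u ∧ A v + z • (v : E) = u) ∧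
  ∀ v : D, R (A v + z • (v : E)) = (v : E)

/-- `A` (with domain `D`) is sectorial of angle `θ` with constant `K` and resolvent family `R`. -/
def SectorialWith (D : Submodule ℂ E) (A : D →ₗ[ℂ] E) (θ K : ℝ)
    (R : ℂ → E →L[ℂ] E) : Prop :=
  1 ≤ K ∧
  IsClosed {q : E × E | ∃ v : D, q.1 = (v : E) ∧ q.2 = A v} ∧
  Dense (D : Set E) ∧
  ∀ z ∈ SectorSet θ, ResolventAt D A (R z) z ∧
    ∀ u : E, (1 + ‖z‖) * ‖R z u‖ ≤ K * ‖u‖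

/-- The contour integral `∫_{Γ_{ρ,θ}} h(λ) dλ`. -/
def gammaIntegral (ρ θ : ℝ) (h : ℂ → E) : E :=
  (-Complex.exp ((θ : ℂ) * Complex.I)) •
      (∫ r in Ioi ρ, h ((r : ℂ) * Complex.exp ((θ : ℂ) * Complex.I))) +
  (Complex.I * (ρ : ℂ)) •
      (∫ φ in Ioo θ (2 * π - θ),
        Complex.exp ((φ : ℂ) * Complex.I) • h ((ρ : ℂ) * Complex.exp ((φ : ℂ) * Complex.I))) +
  Complex.exp (-((θ : ℂ) * Complex.I)) •
      (∫ r in Ioi ρ, h ((r : ℂ) * Complex.exp (-((θ : ℂ) * Complex.I))))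

/-- The contour integral `∫_{-Γ_{ρ,θ}} h(λ) dλ := -∫_{Γ_{ρ,θ}} h(-λ) dλ`. -/
def negGammaIntegral (ρ θ : ℝ) (h : ℂ → E) : E :=
  -gammaIntegral ρ θ (fun z => h (-z))

/-- `(I + μ A)⁻¹ := μ⁻¹ (A + μ⁻¹)⁻¹`, expressed through the resolvent family `R`. -/
def resolventI (R : ℂ → E →L[ℂ] E) (μ : ℂ) : E →L[ℂ] E := μ⁻¹ • R μ⁻¹

/-- `A` (domain `D`, resolvent family `R`) is `T`-sectorial of angle `θ`, constant `K`,
with exponent `p` and `T`-constant `C`. -/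
def TSectorial (D : Submodule ℂ E) (A : D →ₗ[ℂ] E) (θ K : ℝ)
    (R : ℂ → E →L[ℂ] E) (p C : ℝ) : Prop :=
  SectorialWith D A θ K R ∧ 1 < p ∧ 0 < C ∧
  ∀ φ : ℝ, |φ| ≤ θ → ∀ r : ℝ, Real.exp (-1) ≤ r → r ≤ 1 → ∀ n : ℕ, ∀ x : ℕ → E,
    ∃ a : ℕ → ℝ → ℂ, (∀ k, Measurable (a k)) ∧
      (∀ k, ∀ᵐ t ∂(volume.restrict (Ioo (0 : ℝ) (2 * π))), ‖a k t‖ ≤ 1) ∧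
      eLpNorm (fun t : ℝ => ∑ k ∈ Finset.range (n + 1),
          Complex.exp ((k : ℂ) * (t : ℂ) * Complex.I) •
            resolventI R (((r * Real.exp (-(k : ℝ)) : ℝ) : ℂ) *
              Complex.exp ((φ : ℂ) * Complex.I)) (x k))
        (ENNReal.ofReal p) (volume.restrict (Ioo (0 : ℝ) (2 * π)))
      ≤ ENNReal.ofReal C *
        eLpNorm (fun t : ℝ => ∑ k ∈ Finset.range (n + 1), a k t • x k)
          (ENNReal.ofReal p) (volume.restrict (Ioo (0 : ℝ) (2 * π)))

/-- `B` (resolvent family `RB`) admits a bounded `H^∞`-calculus of angle `θB` with constant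
`CB`. -/
def HInftyCalculus (RB : ℂ → E →L[ℂ] E) (θB CB : ℝ) : Prop :=
  0 < CB ∧
  ∀ f : ℂ → ℂ,
    ContinuousOn f {z : ℂ | z ≠ 0 ∧ θB ≤ |z.arg|} →
    DifferentiableOn ℂ f {z : ℂ | θB < |z.arg|} →
    (∃ c > 0, ∃ η > 0, ∀ z : ℂ, z ≠ 0 → θB ≤ |z.arg| →
      ‖f z‖ ≤ c * (‖z‖ / (1 + ‖z‖ ^ 2)) ^ η) →
    ∀ M : ℝ, (∀ z : ℂ, z ≠ 0 → θB ≤ |z.arg| → ‖f z‖ ≤ M) →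
    ∀ u : E, ‖(2 * (π : ℂ) * Complex.I)⁻¹ • gammaIntegral 0 θB (fun z => f z • RB z u)‖
      ≤ CB * M * ‖u‖


/-- cos separation -/
lemma cos_sep {θ θ' a b : ℝ} (hθπ : θ ≤ π) (hθ'0 : 0 ≤ θ') (hθ' : θ' < θ)
    (ha : |a| ≤ θ') (hb1 : θ ≤ |b|) (hb2 : |b| ≤ π) :
    Real.cos (a - b) ≤ Real.cos (θ - θ') := by
  have h1 : θ - θ' ≤ |a - b| := by
    have := abs_sub_abs_le_abs_sub b a
    have : |b| - |a| ≤ |a - b| := by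
      rw [abs_sub_comm]; exact abs_sub_abs_le_abs_sub b a
    linarith
  have h2 : |a - b| ≤ θ' + π := by
    calc |a - b| ≤ |a| + |b| := abs_sub _ _
    _ ≤ θ' + π := by linarith
  have hc : Real.cos (a - b) = Real.cos |a - b| := (Real.cos_abs _).symm
  rw [hc]
  rcases le_or_gt (|a - b|) π with h | h
  · exact Real.cos_le_cos_of_nonneg_of_le_pi (by linarith) h h1
  · have : Real.cos |a - b| = Real.cos (2 * π - |a - b|) := by
      rw [Real.cos_two_pi_sub]
    rw [this]
    exact Real.cos_le_cos_of_nonneg_of_le_pi (by linarith) (by linarith) (by linarith)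

/-- separation of a sector point from large-argument points -/
lemma sep_lemma {θ θ' : ℝ} (hθπ : θ ≤ π) (hθ'0 : 0 ≤ θ') (hθ' : θ' < θ)
    {z l : ℂ} (hz : |z.arg| ≤ θ') (hl : θ ≤ |l.arg|) :
    Real.sqrt ((1 - Real.cos (θ - θ')) / 2) * (‖z‖ + ‖l‖)
      ≤ ‖z - l‖ := by
  set γ := Real.cos (θ - θ') with hγ
  have hγ1 : γ ≤ 1 := Real.cos_le_one _
  have hγ2 : -1 ≤ γ := Real.neg_one_le_cos _
  have hre : (z * (starRingEnd ℂ) l).re = ‖z‖ * ‖l‖ * Real.cos (z.arg - l.arg) := by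
    conv_lhs => rw [← Complex.norm_mul_exp_arg_mul_I z, ← Complex.norm_mul_exp_arg_mul_I l]
    rw [map_mul, ← Complex.exp_conj]
    simp only [map_mul]
    rw [Complex.conj_ofReal, Complex.conj_ofReal, Complex.conj_I]
    rw [show (↑(‖z‖) * Complex.exp (↑z.arg * I) * (↑(‖l‖) * Complex.exp (↑l.arg * -I))) =
        (↑(‖z‖) * ↑(‖l‖)) * Complex.exp (↑z.arg * I + ↑l.arg * -I) by
      rw [Complex.exp_add]; ring]
    rw [show ((z.arg : ℂ) * I + (l.arg : ℂ) * -I) = ((z.arg - l.arg : ℝ) : ℂ) * I by push_cast; ring]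
    rw [show ((‖z‖ : ℂ) * (‖l‖ : ℂ)) = ((‖z‖ * ‖l‖ : ℝ) : ℂ) by push_cast; ring]
    rw [Complex.re_ofReal_mul, Complex.exp_ofReal_mul_I_re]
  have hcos : Real.cos (z.arg - l.arg) ≤ γ :=
    cos_sep hθπ hθ'0 hθ' hz hl (Complex.abs_arg_le_pi l)
  set a := ‖z‖
  set b := ‖l‖
  have ha : 0 ≤ a := norm_nonneg z
  have hb : 0 ≤ b := norm_nonneg l
  have hsq : ((1 - γ) / 2) * (a + b) ^ 2 ≤ ‖z - l‖ ^ 2 := by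
    have h2 : ‖z - l‖ ^ 2 = a ^ 2 + b ^ 2 - 2 * (z * (starRingEnd ℂ) l).re := by
      rw [Complex.sq_norm, Complex.normSq_sub, Complex.sq_norm, Complex.sq_norm]
    rw [h2, hre]
    have hcos' : a * b * Real.cos (z.arg - l.arg) ≤ a * b * γ := by
      apply mul_le_mul_of_nonneg_left hcos (mul_nonneg ha hb)
    nlinarith [sq_nonneg (a - b), sq_nonneg (a + b)]
  calc Real.sqrt ((1 - γ) / 2) * (a + b)
      = Real.sqrt (((1 - γ) / 2) * (a + b) ^ 2) := by
        rw [Real.sqrt_mul (by linarith), Real.sqrt_sq (by linarith)]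
    _ ≤ Real.sqrt (‖z - l‖ ^ 2) := Real.sqrt_le_sqrt hsq
    _ = ‖z - l‖ := by rw [Real.sqrt_sq (norm_nonneg _)]

lemma resolventAt_id {D : Submodule ℂ E} {A : D →ₗ[ℂ] E} {z w : ℂ} {Rz Rw : E →L[ℂ] E}
    (hz : ResolventAt D A Rz z) (hw : ResolventAt D A Rw w) (u : E) :
    Rz u - Rw u = (w - z) • Rz (Rw u) := by
  obtain ⟨vz, hvz, hz2⟩ := hz.1 u
  obtain ⟨vw, hvw, hw2⟩ := hw.1 u
  have key : A (vz - vw) + z • ((vz - vw : D) : E) = (w - z) • (vw : E) := by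
    rw [map_sub, Submodule.coe_sub]
    linear_combination (norm := module) hz2 - hw2
  have h3 := hz.2 (vz - vw)
  rw [key, _root_.map_smul, hvw, Submodule.coe_sub, hvz, hvw] at h3
  exact h3.symm

lemma key_decomp {D : Submodule ℂ E} {A : D →ₗ[ℂ] E} {z l : ℂ} {Rz Rl : E →L[ℂ] E}
    (hz : ResolventAt D A Rz z) (hl : ResolventAt D A Rl l) (hne : z ≠ l) (y : E) :
    Rl y - z • Rz (Rl y) = (-l / (z - l)) • Rl y + (z / (z - l)) • Rz y := by
  have hd : z - l ≠ 0 := sub_ne_zero.2 hne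
  have h1 : (z - l) • Rz (Rl y) = Rl y - Rz y := by
    have := resolventAt_id hz hl y
    linear_combination (norm := module) this
  have h2 : z • Rz (Rl y) = (z / (z - l)) • (Rl y - Rz y) := by
    rw [← h1, smul_smul, div_mul_cancel₀ _ hd]
  rw [h2]
  match_scalars
  · field_simp
    ring
  · field_simp

lemma arg_exp_Ioc {t : ℝ} (ht : t ∈ Set.Ioc (-π) π) : (Complex.exp ((t : ℂ) * Complex.I)).arg = t := by
  rw [Complex.exp_mul_I]
  exact Complex.arg_cos_add_sin_mul_I ht

lemma abs_ray {r : ℝ} (hr : 0 ≤ r) (t : ℝ) :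
    ‖(r : ℂ) * Complex.exp ((t : ℂ) * Complex.I)‖ = r := by
  rw [norm_mul, Complex.norm_exp_ofReal_mul_I, Complex.norm_real, Real.norm_eq_abs, _root_.abs_of_nonneg hr, mul_one]

lemma arg_ray {r : ℝ} (hr : 0 < r) {t : ℝ} (ht : t ∈ Set.Ioc (-π) π) :
    ((r : ℂ) * Complex.exp ((t : ℂ) * Complex.I)).arg = t := by
  rw [Complex.arg_real_mul _ hr, arg_exp_Ioc ht]

lemma arc_arg {θ ψ : ℝ} (hθ0 : 0 < θ) (hθπ : θ < π) (hψ : ψ ∈ Set.Ioo θ (2*π - θ)) {r : ℝ}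
    (hr : 0 < r) : θ ≤ |((r : ℂ) * Complex.exp ((ψ : ℂ) * Complex.I)).arg| := by
  rcases le_or_gt ψ π with h | h
  · rw [arg_ray hr ⟨by linarith [hψ.1], h⟩]
    rw [abs_of_pos (lt_trans hθ0 hψ.1)]
    exact hψ.1.le
  · have hper : Complex.exp ((ψ : ℂ) * Complex.I) = Complex.exp (((ψ - 2*π : ℝ) : ℂ) * Complex.I) := by
      push_cast
      rw [sub_mul, Complex.exp_sub]
      rw [show ((2:ℂ)*π*Complex.I) = 2*π*Complex.I by ring, Complex.exp_two_pi_mul_I, div_one]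
    rw [hper, arg_ray hr ⟨by linarith, by linarith [hψ.2, Real.pi_pos]⟩,
      abs_of_neg (by linarith [hψ.2] : ψ - 2*π < 0)]
    linarith [hψ.2]

lemma master_bound {D : Submodule ℂ E} {A : D →ₗ[ℂ] E} {z l : ℂ} {Rz Rl : E →L[ℂ] E}
    {θ θ' η φ K' : ℝ}
    (hθπ : θ ≤ π) (hθ'0 : 0 ≤ θ') (hθ'θ : θ' < θ)
    (hη0 : 0 ≤ η) (hη1 : η ≤ 1) (hφ0 : 0 < φ)
    (hz : ResolventAt D A Rz z) (hl : ResolventAt D A Rl l)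
    (hzarg : |z.arg| ≤ θ') (hl0 : l ≠ 0) (hlarg : θ ≤ |l.arg|)
    (hK' : 0 < K')
    (hbz : ∀ u, (1 + ‖z‖) * ‖Rz u‖ ≤ K' * ‖u‖)
    (hbl : ∀ u, (1 + ‖l‖) * ‖Rl u‖ ≤ K' * ‖u‖)
    (y : E) :
    ‖z‖ ^ η * ‖(((-l) ^ (-(φ:ℂ))) • Rl y) - z • Rz (((-l) ^ (-(φ:ℂ))) • Rl y)‖
      ≤ (2 * K' * ‖y‖ / Real.sqrt ((1 - Real.cos (θ - θ'))/2)) * ‖l‖ ^ (η - φ - 1) := by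
  set c0 : ℝ := Real.sqrt ((1 - Real.cos (θ - θ'))/2) with hc0def
  have hγ : Real.cos (θ - θ') < 1 := by
    calc Real.cos (θ - θ') < Real.cos 0 :=
      Real.cos_lt_cos_of_nonneg_of_le_pi le_rfl (by linarith) (by linarith)
    _ = 1 := Real.cos_zero
  have hc0pos : 0 < c0 := Real.sqrt_pos.2 (by linarith)
  set a := ‖z‖ with hadef
  set b := ‖l‖ with hbdef
  have ha0 : 0 ≤ a := norm_nonneg z
  have hb0 : 0 < b := norm_pos_iff.mpr hl0
  have hab : 0 < a + b := by linarith
  have hne : z ≠ l := by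
    intro hzl
    rw [hzl] at hzarg
    linarith [hzarg, hlarg]
  have hdzl : c0 * (a + b) ≤ ‖z - l‖ := sep_lemma hθπ hθ'0 hθ'θ hzarg hlarg
  have hdzlpos : 0 < ‖z - l‖ := by
    have : z - l ≠ 0 := sub_ne_zero.2 hne
    exact norm_pos_iff.mpr this
  -- pull out the scalar
  have hpull : (((-l) ^ (-(φ:ℂ))) • Rl y) - z • Rz (((-l) ^ (-(φ:ℂ))) • Rl y)
      = ((-l) ^ (-(φ:ℂ))) • (Rl y - z • Rz (Rl y)) := by
    rw [_root_.map_smul, smul_comm z, ← smul_sub]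
  have habs_s : ‖(-l) ^ (-(φ:ℂ))‖ = b ^ (-φ) := by
    rw [Complex.norm_cpow_of_ne_zero (neg_ne_zero.2 hl0)]
    simp [hbdef]
  -- norm of the bracket
  have hbz' : ‖Rz y‖ ≤ K' * ‖y‖ / (1 + a) := by
    rw [le_div_iff₀ (by linarith)]
    calc ‖Rz y‖ * (1 + a) = (1 + a) * ‖Rz y‖ := by ring
    _ ≤ K' * ‖y‖ := hbz y
  have hbl' : ‖Rl y‖ ≤ K' * ‖y‖ / (1 + b) := by
    rw [le_div_iff₀ (by linarith)]
    calc ‖Rl y‖ * (1 + b) = (1 + b) * ‖Rl y‖ := by ring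
    _ ≤ K' * ‖y‖ := hbl y
  have hynn : 0 ≤ ‖y‖ := norm_nonneg y
  have hN : ‖Rl y - z • Rz (Rl y)‖ ≤ 2 * K' * ‖y‖ / (c0 * (a + b)) := by
    rw [key_decomp hz hl hne y]
    calc ‖(-l / (z - l)) • Rl y + (z / (z - l)) • Rz y‖
        ≤ ‖(-l / (z - l)) • Rl y‖ + ‖(z / (z - l)) • Rz y‖ := norm_add_le _ _
      _ = (b / ‖z - l‖) * ‖Rl y‖ + (a / ‖z - l‖) * ‖Rz y‖ := by
          rw [norm_smul, norm_smul]
          simp [norm_div, hadef, hbdef]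
      _ ≤ (b / ‖z - l‖) * (K' * ‖y‖ / (1 + b))
            + (a / ‖z - l‖) * (K' * ‖y‖ / (1 + a)) := by
          gcongr <;> positivity
      _ = (K' * ‖y‖ / ‖z - l‖) * (b / (1 + b) + a / (1 + a)) := by ring
      _ ≤ (K' * ‖y‖ / ‖z - l‖) * 2 := by
          have h1 : b / (1 + b) ≤ 1 := by rw [div_le_one (by linarith)]; linarith
          have h2 : a / (1 + a) ≤ 1 := by rw [div_le_one (by linarith)]; linarith
          have : 0 ≤ K' * ‖y‖ / ‖z - l‖ := by positivity
          nlinarith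
      _ ≤ 2 * K' * ‖y‖ / (c0 * (a + b)) := by
          rw [div_mul_eq_mul_div, mul_comm (K' * ‖y‖) 2, ← mul_assoc]
          apply div_le_div_of_nonneg_left (by positivity) (by positivity) hdzl
  -- rpow juggling
  have hkey : a ^ η * (b ^ (-φ) * (2 * K' * ‖y‖ / (c0 * (a + b))))
      ≤ (2 * K' * ‖y‖ / c0) * b ^ (η - φ - 1) := by
    have hfact : a ^ η * b ^ (-φ) / (a + b) ≤ b ^ (η - φ - 1) := by
      calc a ^ η * b ^ (-φ) / (a + b) ≤ (a + b) ^ η * b ^ (-φ) / (a + b) := by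
            have h := Real.rpow_le_rpow ha0 (by linarith : a ≤ a + b) hη0
            exact (div_le_div_iff_of_pos_right hab).2 (mul_le_mul_of_nonneg_right h (Real.rpow_nonneg hb0.le _))
        _ = b ^ (-φ) * (a + b) ^ (η - 1) := by
            rw [Real.rpow_sub_one (ne_of_gt hab)]; ring
        _ ≤ b ^ (-φ) * b ^ (η - 1) := by
            apply mul_le_mul_of_nonneg_left
              (Real.rpow_le_rpow_of_nonpos hb0 (by linarith) (by linarith))
              (Real.rpow_nonneg hb0.le _)
        _ = b ^ (η - φ - 1) := by
            rw [← Real.rpow_add hb0]; congr 1; ring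
    calc a ^ η * (b ^ (-φ) * (2 * K' * ‖y‖ / (c0 * (a + b))))
        = (2 * K' * ‖y‖ / c0) * (a ^ η * b ^ (-φ) / (a + b)) := by
          field_simp
      _ ≤ (2 * K' * ‖y‖ / c0) * b ^ (η - φ - 1) := by
          apply mul_le_mul_of_nonneg_left hfact (by positivity)
  calc a ^ η * ‖(((-l) ^ (-(φ:ℂ))) • Rl y) - z • Rz (((-l) ^ (-(φ:ℂ))) • Rl y)‖
      = a ^ η * (b ^ (-φ) * ‖Rl y - z • Rz (Rl y)‖) := by
        rw [hpull, norm_smul, habs_s]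
    _ ≤ a ^ η * (b ^ (-φ) * (2 * K' * ‖y‖ / (c0 * (a + b)))) := by
        gcongr a ^ η * (b ^ (-φ) * ?_)
    _ ≤ (2 * K' * ‖y‖ / c0) * b ^ (η - φ - 1) := hkey

lemma neg_mem_slitPlane {l : ℂ} (h0 : l ≠ 0) (harg : l.arg ≠ 0) : -l ∈ Complex.slitPlane := by
  rw [Complex.mem_slitPlane_iff]
  rcases eq_or_ne l.im 0 with him | him
  · left
    have hre : l.re < 0 := by
      by_contra h
      exact harg (Complex.arg_eq_zero_iff.2 ⟨le_of_not_gt h, him⟩)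
    simpa using hre
  · right; simpa using him

/-- bound for the integrand norm, used for integrability -/
lemma integrand_norm_bound {l : ℂ} {Rl : E →L[ℂ] E}
    {φ K' : ℝ} (hφ0 : 0 < φ) (hl0 : l ≠ 0) (hK' : 0 < K')
    (hbl : ∀ u, (1 + ‖l‖) * ‖Rl u‖ ≤ K' * ‖u‖) (y : E) :
    ‖((-l) ^ (-(φ:ℂ))) • Rl y‖ ≤ K' * ‖y‖ * ‖l‖ ^ (-φ - 1) := by
  have hb0 : 0 < ‖l‖ := norm_pos_iff.mpr hl0
  have habs_s : ‖(-l) ^ (-(φ:ℂ))‖ = ‖l‖ ^ (-φ) := by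
    rw [Complex.norm_cpow_of_ne_zero (neg_ne_zero.2 hl0)]
    simp
  have hbl' : ‖Rl y‖ ≤ K' * ‖y‖ / (1 + ‖l‖) := by
    rw [le_div_iff₀ (by linarith)]
    calc ‖Rl y‖ * (1 + ‖l‖) = (1 + ‖l‖) * ‖Rl y‖ := by ring
    _ ≤ K' * ‖y‖ := hbl y
  rw [norm_smul, habs_s]
  calc ‖l‖ ^ (-φ) * ‖Rl y‖ ≤ ‖l‖ ^ (-φ) * (K' * ‖y‖ / (1 + ‖l‖)) := by
        have := Real.rpow_nonneg hb0.le (-φ)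
        gcongr
    _ ≤ ‖l‖ ^ (-φ) * (K' * ‖y‖ / ‖l‖) := by
        have h1 : ‖l‖ ≤ 1 + ‖l‖ := by linarith
        have := Real.rpow_nonneg hb0.le (-φ)
        gcongr
    _ = K' * ‖y‖ * ‖l‖ ^ (-φ - 1) := by
        rw [Real.rpow_sub_one (ne_of_gt hb0)]; ring

lemma ray_estimate {D : Submodule ℂ E} {A : D →ₗ[ℂ] E} {R : ℂ → E →L[ℂ] E}
    {θ θ' φ η ρ K' : ℝ} {z : ℂ} (y : E) {S : Set ℂ}
    (hρ : 0 < ρ) (hθ0 : 0 < θ) (hθπ : θ < π) (hθ'0 : 0 ≤ θ') (hθ'θ : θ' < θ)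
    (hφ0 : 0 < φ) (hφ1 : φ < 1) (hη0 : 0 ≤ η) (hηφ : η < φ)
    (hK'pos : 0 < K')
    (hresS : ∀ w ∈ S, ResolventAt D A (R w) w)
    (hbdS : ∀ w ∈ S, ∀ u, (1 + ‖w‖) * ‖R w u‖ ≤ K' * ‖u‖)
    (hcont : ContinuousOn (fun w => R w y) S)
    (hzS : z ∈ S) (hzarg : |z.arg| ≤ θ')
    (t : ℝ) (ht1 : -π < t) (ht2 : t ≤ π) (ht3 : |t| = θ)
    (htS : ∀ r : ℝ, r ∈ Ioi ρ → (r : ℂ) * Complex.exp ((t:ℂ) * Complex.I) ∈ S) :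
    ‖z‖ ^ η * ‖(ContinuousLinearMap.id ℂ E - z • R z)
        (∫ r in Ioi ρ, ((-((r:ℂ) * Complex.exp ((t:ℂ)*Complex.I))) ^ (-(φ:ℂ))) •
          R ((r:ℂ) * Complex.exp ((t:ℂ)*Complex.I)) y)‖
      ≤ (2 * K' * ‖y‖ / Real.sqrt ((1 - Real.cos (θ - θ'))/2)) *
          ∫ r in Ioi ρ, r ^ (η - φ - 1) := by
  set T : E →L[ℂ] E := ContinuousLinearMap.id ℂ E - z • R z with hT
  set e : ℂ := Complex.exp ((t:ℂ)*Complex.I) with he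
  set f : ℝ → E := fun r => ((-((r:ℂ) * e)) ^ (-(φ:ℂ))) • R ((r:ℂ) * e) y with hf
  -- basic facts about ray points
  have hray : ∀ r : ℝ, r ∈ Ioi ρ → ‖(r:ℂ) * e‖ = r ∧ ((r:ℂ) * e).arg = t ∧
      ((r:ℂ) * e) ≠ 0 := by
    intro r hr
    have hr0 : 0 < r := lt_trans hρ hr
    refine ⟨abs_ray hr0.le t, arg_ray hr0 ⟨ht1, ht2⟩, ?_⟩
    intro h0
    have := abs_ray hr0.le t
    rw [h0] at this
    simp at this
    linarith
  have ht0 : t ≠ 0 := by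
    intro h; rw [h] at ht3; simp at ht3; linarith
  -- integrability of f on Ioi ρ
  have hfint : IntegrableOn f (Ioi ρ) := by
    have hmeas : AEStronglyMeasurable f (volume.restrict (Ioi ρ)) := by
      apply ContinuousOn.aestronglyMeasurable _ measurableSet_Ioi
      apply ContinuousOn.smul
      · intro r hr
        apply ContinuousAt.continuousWithinAt
        obtain ⟨habs, harg, h0⟩ := hray r hr
        have hb : ContinuousAt (fun x : ℝ => -((x:ℂ) * e)) r :=
          ((Complex.continuous_ofReal.mul continuous_const).neg).continuousAt
        exact hb.cpow continuousAt_const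
          (neg_mem_slitPlane h0 (by rw [harg]; exact ht0))
      · apply hcont.comp
        · exact (Complex.continuous_ofReal.mul continuous_const).continuousOn
        · exact htS
    apply Integrable.mono' (g := fun r => K' * ‖y‖ * r ^ (-φ - 1)) _ hmeas
    · rw [ae_restrict_iff' measurableSet_Ioi]
      apply ae_of_all
      intro r hr
      obtain ⟨habs, harg, h0⟩ := hray r hr
      have := integrand_norm_bound (Rl := R ((r:ℂ)*e)) hφ0 h0 hK'pos
        (hbdS _ (htS r hr)) y
      rw [habs] at this
      exact this
    · exact ((integrableOn_Ioi_rpow_of_lt (by linarith) hρ).const_mul _)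
  -- move T inside
  rw [← ContinuousLinearMap.integral_comp_comm T hfint]
  -- estimate
  have hIinf : IntegrableOn (fun r : ℝ => r ^ (η - φ - 1)) (Ioi ρ) :=
    integrableOn_Ioi_rpow_of_lt (by linarith) hρ
  set C1 : ℝ := 2 * K' * ‖y‖ / Real.sqrt ((1 - Real.cos (θ - θ'))/2) with hC1
  have hzn : 0 ≤ ‖z‖ ^ η := Real.rpow_nonneg (norm_nonneg z) _
  calc ‖z‖ ^ η * ‖∫ r in Ioi ρ, T (f r)‖
      ≤ ‖z‖ ^ η * ∫ r in Ioi ρ, ‖T (f r)‖ := by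
        gcongr
        exact norm_integral_le_integral_norm _
    _ = ∫ r in Ioi ρ, ‖z‖ ^ η * ‖T (f r)‖ := by
        rw [integral_const_mul]
    _ ≤ ∫ r in Ioi ρ, C1 * r ^ (η - φ - 1) := by
        apply integral_mono_of_nonneg
        · apply ae_of_all; intro r; positivity
        · exact hIinf.const_mul _
        · apply (ae_restrict_iff' measurableSet_Ioi).2
          apply ae_of_all
          intro r hr
          obtain ⟨habs, harg, h0⟩ := hray r hr
          have hTf : T (f r) = (f r) - z • (R z (f r)) := by simp [hT]
          dsimp only
          rw [hTf, hf]
          have := master_bound (θ := θ) (θ' := θ') hθπ.le hθ'0 hθ'θ hη0 (by linarith) hφ0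
            (hresS z hzS) (hresS _ (htS r hr)) hzarg h0 (by rw [harg]; rw [ht3]) hK'pos
            (hbdS z hzS) (hbdS _ (htS r hr)) y
          rw [habs] at this
          exact this
    _ = C1 * ∫ r in Ioi ρ, r ^ (η - φ - 1) := by rw [integral_const_mul]

lemma arc_estimate {D : Submodule ℂ E} {A : D →ₗ[ℂ] E} {R : ℂ → E →L[ℂ] E}
    {θ θ' φ η ρ K' : ℝ} {z : ℂ} (y : E) {S : Set ℂ}
    (hρ : 0 < ρ) (hθ0 : 0 < θ) (hθπ : θ < π) (hθ'0 : 0 ≤ θ') (hθ'θ : θ' < θ)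
    (hφ0 : 0 < φ) (hφ1 : φ < 1) (hη0 : 0 ≤ η) (hηφ : η < φ)
    (hK'pos : 0 < K')
    (hresS : ∀ w ∈ S, ResolventAt D A (R w) w)
    (hbdS : ∀ w ∈ S, ∀ u, (1 + ‖w‖) * ‖R w u‖ ≤ K' * ‖u‖)
    (hcont : ContinuousOn (fun w => R w y) S)
    (hzS : z ∈ S) (hzarg : |z.arg| ≤ θ')
    (harcS : ∀ ψ : ℝ, ψ ∈ Ioo θ (2*π - θ) → (ρ:ℂ) * Complex.exp ((ψ:ℂ) * Complex.I) ∈ S) :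
    ‖z‖ ^ η * ‖(ContinuousLinearMap.id ℂ E - z • R z)
        (∫ ψ in Ioo θ (2*π - θ), Complex.exp ((ψ:ℂ)*Complex.I) •
          (((-((ρ:ℂ) * Complex.exp ((ψ:ℂ)*Complex.I))) ^ (-(φ:ℂ))) •
            R ((ρ:ℂ) * Complex.exp ((ψ:ℂ)*Complex.I)) y))‖
      ≤ (2*π - θ - θ) * ((2 * K' * ‖y‖ / Real.sqrt ((1 - Real.cos (θ - θ'))/2)) *
          ρ ^ (η - φ - 1)) := by
  set T : E →L[ℂ] E := ContinuousLinearMap.id ℂ E - z • R z with hT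
  set f : ℝ → E := fun ψ => Complex.exp ((ψ:ℂ)*Complex.I) •
      (((-((ρ:ℂ) * Complex.exp ((ψ:ℂ)*Complex.I))) ^ (-(φ:ℂ))) •
        R ((ρ:ℂ) * Complex.exp ((ψ:ℂ)*Complex.I)) y) with hf
  have harc : ∀ ψ : ℝ, ψ ∈ Ioo θ (2*π - θ) →
      ‖(ρ:ℂ) * Complex.exp ((ψ:ℂ)*Complex.I)‖ = ρ ∧
      ((ρ:ℂ) * Complex.exp ((ψ:ℂ)*Complex.I)) ≠ 0 ∧
      θ ≤ |((ρ:ℂ) * Complex.exp ((ψ:ℂ)*Complex.I)).arg| := by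
    intro ψ hψ
    refine ⟨abs_ray hρ.le ψ, ?_, arc_arg hθ0 hθπ hψ hρ⟩
    intro h0
    have := abs_ray hρ.le ψ
    rw [h0] at this
    simp at this
    linarith
  have hargne : ∀ ψ : ℝ, ψ ∈ Ioo θ (2*π - θ) →
      ((ρ:ℂ) * Complex.exp ((ψ:ℂ)*Complex.I)).arg ≠ 0 := by
    intro ψ hψ h0
    have := (harc ψ hψ).2.2
    rw [h0] at this
    simp at this
    linarith
  have hfint : IntegrableOn f (Ioo θ (2*π - θ)) := by
    have hmeas : AEStronglyMeasurable f (volume.restrict (Ioo θ (2*π - θ))) := by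
      apply ContinuousOn.aestronglyMeasurable _ measurableSet_Ioo
      apply ContinuousOn.smul
      · exact (Continuous.cexp (Complex.continuous_ofReal.mul continuous_const)).continuousOn
      · apply ContinuousOn.smul
        · intro ψ hψ
          apply ContinuousAt.continuousWithinAt
          have hb : ContinuousAt (fun x : ℝ => -((ρ:ℂ) * Complex.exp ((x:ℂ)*Complex.I))) ψ :=
            ((continuous_const.mul
              (Continuous.cexp (Complex.continuous_ofReal.mul continuous_const))).neg).continuousAt
          exact hb.cpow continuousAt_const
            (neg_mem_slitPlane (harc ψ hψ).2.1 (hargne ψ hψ))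
        · apply hcont.comp
          · exact (continuous_const.mul
              (Continuous.cexp (Complex.continuous_ofReal.mul continuous_const))).continuousOn
          · exact harcS
    apply Integrable.mono' (g := fun _ => K' * ‖y‖ * ρ ^ (-φ - 1)) _ hmeas
    · rw [ae_restrict_iff' measurableSet_Ioo]
      apply ae_of_all
      intro ψ hψ
      obtain ⟨habs, h0, harg⟩ := harc ψ hψ
      have hb := integrand_norm_bound (Rl := R ((ρ:ℂ) * Complex.exp ((ψ:ℂ)*Complex.I)))
        hφ0 h0 hK'pos (hbdS _ (harcS ψ hψ)) y
      rw [habs] at hb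
      calc ‖f ψ‖ = ‖((-((ρ:ℂ) * Complex.exp ((ψ:ℂ)*Complex.I))) ^ (-(φ:ℂ))) •
            R ((ρ:ℂ) * Complex.exp ((ψ:ℂ)*Complex.I)) y‖ := by
            rw [hf]
            dsimp only
            rw [norm_smul, Complex.norm_exp_ofReal_mul_I, one_mul]
      _ ≤ K' * ‖y‖ * ρ ^ (-φ - 1) := hb
    · rw [integrable_const_iff]
      right
      infer_instance
  rw [← ContinuousLinearMap.integral_comp_comm T hfint]
  set C1 : ℝ := 2 * K' * ‖y‖ / Real.sqrt ((1 - Real.cos (θ - θ'))/2) with hC1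
  have hC1nn : 0 ≤ C1 := by positivity
  have hzn : 0 ≤ ‖z‖ ^ η := Real.rpow_nonneg (norm_nonneg z) _
  calc ‖z‖ ^ η * ‖∫ ψ in Ioo θ (2*π - θ), T (f ψ)‖
      ≤ ‖z‖ ^ η * ∫ ψ in Ioo θ (2*π - θ), ‖T (f ψ)‖ := by
        gcongr
        exact norm_integral_le_integral_norm _
    _ = ∫ ψ in Ioo θ (2*π - θ), ‖z‖ ^ η * ‖T (f ψ)‖ := by
        rw [integral_const_mul]
    _ ≤ ∫ _ψ in Ioo θ (2*π - θ), C1 * ρ ^ (η - φ - 1) := by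
        apply integral_mono_of_nonneg
        · apply ae_of_all; intro ψ; positivity
        · rw [integrable_const_iff]
          right
          infer_instance
        · apply (ae_restrict_iff' measurableSet_Ioo).2
          apply ae_of_all
          intro ψ hψ
          obtain ⟨habs, h0, harg⟩ := harc ψ hψ
          dsimp only
          have hTf : T (f ψ) = Complex.exp ((ψ:ℂ)*Complex.I) •
              ((((-((ρ:ℂ) * Complex.exp ((ψ:ℂ)*Complex.I))) ^ (-(φ:ℂ))) •
                R ((ρ:ℂ) * Complex.exp ((ψ:ℂ)*Complex.I)) y) -
              z • (R z (((-((ρ:ℂ) * Complex.exp ((ψ:ℂ)*Complex.I))) ^ (-(φ:ℂ))) •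
                R ((ρ:ℂ) * Complex.exp ((ψ:ℂ)*Complex.I)) y))) := by
            rw [hf]
            dsimp only
            simp only [hT, ContinuousLinearMap.sub_apply, ContinuousLinearMap.id_apply,
              ContinuousLinearMap.smul_apply, _root_.map_smul, smul_sub]
            module
          rw [hTf, norm_smul, Complex.norm_exp_ofReal_mul_I, one_mul]
          have := master_bound (θ := θ) (θ' := θ') hθπ.le hθ'0 hθ'θ hη0 (by linarith) hφ0
            (hresS z hzS) (hresS _ (harcS ψ hψ)) hzarg h0 harg hK'pos
            (hbdS z hzS) (hbdS _ (harcS ψ hψ)) y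
          rw [habs] at this
          exact this
    _ = (2*π - θ - θ) * (C1 * ρ ^ (η - φ - 1)) := by
        rw [setIntegral_const, Real.volume_real_Ioo_of_le (by linarith)]
        rw [smul_eq_mul]



/-- Lemma 2.3: if `A ∈ 𝒫(θ)` and `x = A^{-φ} y` is given by the Dunford
integral over `Γ_{ρ,θ}` (with `ρ > 0` small enough that the closed disc of radius `ρ` lies in
the resolvent set of `-A`, as provided by the sectoriality extension), then for every
`θ' ∈ [0,θ)` and `η ∈ [0,φ)` the function `z ↦ z^η A(A+z)⁻¹ x = z^η (x - z(A+z)⁻¹x)` is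
bounded on `Λ_{θ'}`. -/
theorem bounded_resolvent_decay
    {E : Type*} [NormedAddCommGroup E] [NormedSpace ℂ E] [CompleteSpace E]
    (D : Submodule ℂ E) (A : D →ₗ[ℂ] E) (θ K : ℝ) (R : ℂ → E →L[ℂ] E)
    (hθ0 : 0 < θ) (hθπ : θ < π) (hsec : SectorialWith D A θ K R)
    (φ : ℝ) (hφ0 : 0 < φ) (hφ1 : φ < 1) (ρ : ℝ) (hρ : 0 < ρ)
    (hdisc : ∀ z : ℂ, ‖z‖ ≤ ρ → ResolventAt D A (R z) z ∧
      ∀ u : E, (1 + ‖z‖) * ‖R z u‖ ≤ (2 * K + 1) * ‖u‖)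
    (y x : E)
    (hx : x = (2 * (π : ℂ) * Complex.I)⁻¹ •
      gammaIntegral ρ θ (fun z => ((-z) ^ (-(φ : ℂ))) • R z y)) :
    ∀ θ' : ℝ, 0 ≤ θ' → θ' < θ → ∀ η : ℝ, 0 ≤ η → η < φ →
      ∃ M : ℝ, ∀ z ∈ SectorSet θ', ‖z‖ ^ η * ‖x - z • R z x‖ ≤ M := by
  intro θ' hθ'0 hθ'θ η hη0 hηφ
  have hK1 : (1:ℝ) ≤ K := hsec.1
  set K' : ℝ := 2 * K + 1 with hK'def
  have hK'pos : (0:ℝ) < K' := by rw [hK'def]; linarith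
  set c0 : ℝ := Real.sqrt ((1 - Real.cos (θ - θ'))/2) with hc0def
  set C1 : ℝ := 2 * K' * ‖y‖ / c0 with hC1def
  set S : Set ℂ := SectorSet θ ∪ Metric.closedBall 0 ρ with hSdef
  have hmem_ball : ∀ w : ℂ, ‖w‖ ≤ ρ → w ∈ S := fun w hw =>
    Or.inr (by simpa [Metric.mem_closedBall, Complex.dist_eq] using hw)
  have hmem_sec : ∀ w : ℂ, |w.arg| ≤ θ → w ∈ S := fun w hw => Or.inl hw
  have hresS : ∀ w ∈ S, ResolventAt D A (R w) w := by
    intro w hw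
    rcases hw with hw | hw
    · exact (hsec.2.2.2 w hw).1
    · exact (hdisc w (by simpa [Metric.mem_closedBall, Complex.dist_eq] using hw)).1
  have hbdS : ∀ w ∈ S, ∀ u, (1 + ‖w‖) * ‖R w u‖ ≤ K' * ‖u‖ := by
    intro w hw u
    rcases hw with hw | hw
    · calc (1 + ‖w‖) * ‖R w u‖ ≤ K * ‖u‖ := (hsec.2.2.2 w hw).2 u
        _ ≤ K' * ‖u‖ := by
          have := norm_nonneg u
          rw [hK'def]
          nlinarith
    · exact (hdisc w (by simpa [Metric.mem_closedBall, Complex.dist_eq] using hw)).2 u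
  have hRleS : ∀ w ∈ S, ∀ u : E, ‖R w u‖ ≤ K' * ‖u‖ := by
    intro w hw u
    have h := hbdS w hw u
    nlinarith [norm_nonneg w, norm_nonneg (R w u), norm_nonneg u]
  have hcont : ContinuousOn (fun w => R w y) S := by
    apply LipschitzOnWith.continuousOn (K := Real.toNNReal (K' * K' * ‖y‖))
    rw [lipschitzOnWith_iff_dist_le_mul]
    intro w hw v hv
    rw [dist_eq_norm, Real.coe_toNNReal _ (by positivity), Complex.dist_eq]
    rw [resolventAt_id (hresS w hw) (hresS v hv) y, norm_smul]
    calc ‖v - w‖ * ‖R w (R v y)‖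
        ≤ ‖v - w‖ * (K' * (K' * ‖y‖)) := by
          have h1 : ‖R w (R v y)‖ ≤ K' * ‖R v y‖ := hRleS w hw _
          have h2 : ‖R v y‖ ≤ K' * ‖y‖ := hRleS v hv y
          have h3 := norm_nonneg (v - w)
          have h4 : ‖R w (R v y)‖ ≤ K' * (K' * ‖y‖) :=
            h1.trans (mul_le_mul_of_nonneg_left h2 hK'pos.le)
          exact mul_le_mul_of_nonneg_left h4 h3
      _ = K' * K' * ‖y‖ * ‖w - v‖ := by
          rw [norm_sub_rev]
          ring
  refine ⟨(2*π)⁻¹ * (C1 * (∫ r in Ioi ρ, r ^ (η - φ - 1)) +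
      ρ * ((2*π - θ - θ) * (C1 * ρ ^ (η - φ - 1))) +
      C1 * (∫ r in Ioi ρ, r ^ (η - φ - 1))), ?_⟩
  intro z hz
  have hzarg : |z.arg| ≤ θ' := hz
  have hzS : z ∈ S := hmem_sec z (le_trans hzarg hθ'θ.le)
  set T : E →L[ℂ] E := ContinuousLinearMap.id ℂ E - z • R z with hTdef
  have hTx : x - z • R z x = T x := by simp [hTdef]
  rw [hTx, hx, ContinuousLinearMap.map_smul]
  simp only [gammaIntegral]
  rw [show Complex.exp (-((θ:ℂ) * Complex.I)) = Complex.exp (((-θ : ℝ):ℂ) * Complex.I) from by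
    rw [Complex.ofReal_neg, neg_mul]]
  rw [map_add, map_add, ContinuousLinearMap.map_smul, ContinuousLinearMap.map_smul,
    ContinuousLinearMap.map_smul]
  have habsc : ‖(2*(π:ℂ)*Complex.I)⁻¹‖ = (2*π)⁻¹ := by
    simp [map_inv₀, _root_.abs_of_nonneg Real.pi_pos.le]
  -- estimates
  have hray1 := ray_estimate (A := A) y hρ hθ0 hθπ hθ'0 hθ'θ hφ0 hφ1 hη0 hηφ hK'pos
    hresS hbdS hcont hzS hzarg θ (by linarith [Real.pi_pos]) hθπ.le (abs_of_pos hθ0)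
    (fun r hr => hmem_sec _ (by
      rw [arg_ray (lt_trans hρ hr) ⟨by linarith [Real.pi_pos], hθπ.le⟩, abs_of_pos hθ0]))
  have hray2 := ray_estimate (A := A) y hρ hθ0 hθπ hθ'0 hθ'θ hφ0 hφ1 hη0 hηφ hK'pos
    hresS hbdS hcont hzS hzarg (-θ) (by linarith) (by linarith)
    (by rw [abs_neg, abs_of_pos hθ0])
    (fun r hr => hmem_sec _ (by
      rw [arg_ray (lt_trans hρ hr) ⟨by linarith, by linarith⟩, abs_neg, abs_of_pos hθ0]))
  have harc := arc_estimate (A := A) y hρ hθ0 hθπ hθ'0 hθ'θ hφ0 hφ1 hη0 hηφ hK'pos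
    hresS hbdS hcont hzS hzarg
    (fun ψ hψ => hmem_ball _ (le_of_eq (abs_ray hρ.le ψ)))
  have hzn : 0 ≤ ‖z‖ ^ η := Real.rpow_nonneg (norm_nonneg z) _
  have hn1 : ‖-Complex.exp ((θ:ℂ)*Complex.I)‖ = 1 := by
    rw [norm_neg, Complex.norm_exp_ofReal_mul_I]
  have hn2 : ‖Complex.I * (ρ:ℂ)‖ = ρ := by
    rw [norm_mul, Complex.norm_I, Complex.norm_real, Real.norm_eq_abs, one_mul,
      _root_.abs_of_pos hρ]
  have hn3 : ‖Complex.exp (((-θ:ℝ):ℂ)*Complex.I)‖ = 1 := by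
    rw [Complex.norm_exp_ofReal_mul_I]
  set G1 := T (∫ r in Ioi ρ, ((-((r:ℂ) * Complex.exp ((θ:ℂ)*Complex.I))) ^ (-(φ:ℂ))) •
    R ((r:ℂ) * Complex.exp ((θ:ℂ)*Complex.I)) y) with hG1
  set G2 := T (∫ ψ in Ioo θ (2*π - θ), Complex.exp ((ψ:ℂ)*Complex.I) •
    (((-((ρ:ℂ) * Complex.exp ((ψ:ℂ)*Complex.I))) ^ (-(φ:ℂ))) •
      R ((ρ:ℂ) * Complex.exp ((ψ:ℂ)*Complex.I)) y)) with hG2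
  set G3 := T (∫ r in Ioi ρ, ((-((r:ℂ) * Complex.exp (((-θ:ℝ):ℂ)*Complex.I))) ^ (-(φ:ℂ))) •
    R ((r:ℂ) * Complex.exp (((-θ:ℝ):ℂ)*Complex.I)) y) with hG3
  calc ‖z‖ ^ η * ‖(2*(π:ℂ)*Complex.I)⁻¹ •
        ((-Complex.exp ((θ:ℂ)*Complex.I)) • G1 + (Complex.I * (ρ:ℂ)) • G2 +
          Complex.exp (((-θ:ℝ):ℂ)*Complex.I) • G3)‖
      = (2*π)⁻¹ * (‖z‖ ^ η *
          ‖(-Complex.exp ((θ:ℂ)*Complex.I)) • G1 + (Complex.I * (ρ:ℂ)) • G2 +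
            Complex.exp (((-θ:ℝ):ℂ)*Complex.I) • G3‖) := by
        rw [norm_smul, habsc]
        ring
    _ ≤ (2*π)⁻¹ * (‖z‖ ^ η * (‖G1‖ + ρ * ‖G2‖ + ‖G3‖)) := by
        apply mul_le_mul_of_nonneg_left _ (by positivity)
        apply mul_le_mul_of_nonneg_left _ hzn
        calc ‖(-Complex.exp ((θ:ℂ)*Complex.I)) • G1 + (Complex.I * (ρ:ℂ)) • G2 +
              Complex.exp (((-θ:ℝ):ℂ)*Complex.I) • G3‖
            ≤ ‖(-Complex.exp ((θ:ℂ)*Complex.I)) • G1 + (Complex.I * (ρ:ℂ)) • G2‖ +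
              ‖Complex.exp (((-θ:ℝ):ℂ)*Complex.I) • G3‖ := norm_add_le _ _
          _ ≤ ‖(-Complex.exp ((θ:ℂ)*Complex.I)) • G1‖ + ‖(Complex.I * (ρ:ℂ)) • G2‖ +
              ‖Complex.exp (((-θ:ℝ):ℂ)*Complex.I) • G3‖ := by
                gcongr
                exact norm_add_le _ _
          _ = ‖G1‖ + ρ * ‖G2‖ + ‖G3‖ := by
                rw [norm_smul, norm_smul, norm_smul, hn1, hn2, hn3, one_mul, one_mul]
    _ = (2*π)⁻¹ * (‖z‖ ^ η * ‖G1‖ + ρ * (‖z‖ ^ η * ‖G2‖) +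
        ‖z‖ ^ η * ‖G3‖) := by ring
    _ ≤ (2*π)⁻¹ * (C1 * (∫ r in Ioi ρ, r ^ (η - φ - 1)) +
        ρ * ((2*π - θ - θ) * (C1 * ρ ^ (η - φ - 1))) +
        C1 * (∫ r in Ioi ρ, r ^ (η - φ - 1))) := by
        apply mul_le_mul_of_nonneg_left _ (by positivity)
        exact add_le_add (add_le_add hray1 (mul_le_mul_of_nonneg_left harc hρ.le)) hray2
end
end

section
/- Let E be a complex Banach space, A sectorial of angle θ_A, B sectorial of angle θ_B, with θ_A + θ_B > π and A, B resolvent commuting. Let w ∈ ℂ with Re w < 0 and ρ > 0, and define L := (1/2πi)∫_{Γ_{ρ,θ_B}} (A−λ)^{-1}(B+λ)^{-1}(−λ)^w dλ ∈ L(E) and B^w := (1/2πi)∫_{Γ_{ρ,θ_B}} (−λ)^w (B+λ)^{-1} dλ ∈ L(E), where (A−λ)^{-1} := (A+(−λ))^{-1} (note −λ ∈ Λ_{θ_A} for λ ∈ Γ_{ρ,θ_B} since π − θ_B < θ_A). Then for every u ∈ E one has Lu ∈ D(A) and A(Lu) = B^w u − (1/2πi)∫_{Γ_{ρ,θ_B}}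 (A−λ)^{-1}(B+λ)^{-1}(−λ)^{1+w} u dλ. -/
open Complex MeasureTheory Real Set Filter

noncomputable section

variable {E : Type*} [NormedAddCommGroup E] [NormedSpace ℂ E] [CompleteSpace E]

set_option linter.unusedSectionVars false
set_option maxHeartbeats 1000000

open Topology

namespace ACL

variable {D : Submodule ℂ E} {A : D →ₗ[ℂ] E}

lemma res_eq {R R' : E →L[ℂ] E} {z z' : ℂ}
    (h : ResolventAt D A R z) (h' : ResolventAt D A R' z') (x : E) :
    R x = R' x + (z' - z) • R (R' x) := by
  obtain ⟨v, hv1, hv2⟩ := h'.1 x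
  have hx : x = (A v + z • (v : E)) + (z' - z) • (v : E) := by
    rw [← hv2]; module
  calc R x = R ((A v + z • (v : E)) + (z' - z) • (v : E)) := by rw [← hx]
    _ = R (A v + z • (v : E)) + (z' - z) • R (v : E) := by rw [map_add, _root_.map_smul]
    _ = (v : E) + (z' - z) • R (v : E) := by rw [h.2 v]
    _ = R' x + (z' - z) • R (R' x) := by rw [hv1]

lemma key_pointwise {RA : ℂ → E →L[ℂ] E} {R0 : E →L[ℂ] E}
    (h0 : ResolventAt D A R0 0) {l : ℂ} (hl : l ≠ 0)
    (hres : ResolventAt D A (RA (-l)) (-l)) (w : ℂ) (x : E) :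
    R0 ((-l) ^ w • x) - R0 ((-l) ^ (1 + w) • RA (-l) x) = (-l) ^ w • RA (-l) x := by
  have h := res_eq h0 hres x
  have hne : (-l) ≠ 0 := neg_ne_zero.2 hl
  have h2 : (-l) ^ (1 + w) = (-l) * (-l) ^ w := by
    rw [Complex.cpow_add _ _ hne, Complex.cpow_one]
  rw [_root_.map_smul, _root_.map_smul, h, h2]
  module


/-- norm bound transfer: `(1+|z|)‖Ru‖ ≤ K‖u‖` gives `‖Ru‖ ≤ K‖u‖`. -/
lemma bound_simple {R : E →L[ℂ] E} {z : ℂ} {K : ℝ}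
    (h : ∀ u : E, (1 + ‖z‖) * ‖R u‖ ≤ K * ‖u‖) (u : E) : ‖R u‖ ≤ K * ‖u‖ := by
  have h1 : (1:ℝ) ≤ 1 + ‖z‖ := le_add_of_nonneg_right (norm_nonneg z)
  calc ‖R u‖ = 1 * ‖R u‖ := (one_mul _).symm
    _ ≤ (1 + ‖z‖) * ‖R u‖ := by
        apply mul_le_mul_of_nonneg_right h1 (norm_nonneg _)
    _ ≤ K * ‖u‖ := h u

/-- Lipschitz estimate for the resolvent family on a set where it is defined with bound `K`. -/
lemma res_lip {R : ℂ → E →L[ℂ] E} {s : Set ℂ} {K : ℝ} (hK : 0 ≤ K)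
    (h : ∀ z ∈ s, ResolventAt D A (R z) z ∧ ∀ u : E, (1 + ‖z‖) * ‖R z u‖ ≤ K * ‖u‖)
    (x : E) {z z' : ℂ} (hz : z ∈ s) (hz' : z' ∈ s) :
    ‖R z x - R z' x‖ ≤ K ^ 2 * ‖x‖ * ‖z - z'‖ := by
  have e := res_eq (h z hz).1 (h z' hz').1 x
  have : R z x - R z' x = (z' - z) • R z (R z' x) := by rw [e]; abel
  rw [this, norm_smul]
  have h1 : ‖R z (R z' x)‖ ≤ K * (K * ‖x‖) := by
    calc ‖R z (R z' x)‖ ≤ K * ‖R z' x‖ := bound_simple (h z hz).2 _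
      _ ≤ K * (K * ‖x‖) :=
          mul_le_mul_of_nonneg_left (bound_simple (h z' hz').2 x) hK
  calc ‖z' - z‖ * ‖R z (R z' x)‖ ≤ ‖z' - z‖ * (K * (K * ‖x‖)) :=
        mul_le_mul_of_nonneg_left h1 (norm_nonneg _)
    _ = K ^ 2 * ‖x‖ * ‖z - z'‖ := by
        rw [norm_sub_rev z' z]
        ring

lemma res_continuousOn {R : ℂ → E →L[ℂ] E} {s : Set ℂ} {K : ℝ} (hK : 0 ≤ K)
    (h : ∀ z ∈ s, ResolventAt D A (R z) z ∧ ∀ u : E, (1 + ‖z‖) * ‖R z u‖ ≤ K * ‖u‖)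
    (x : E) : ContinuousOn (fun z => R z x) s := by
  have : LipschitzOnWith (Real.toNNReal (K ^ 2 * ‖x‖)) (fun z => R z x) s := by
    rw [lipschitzOnWith_iff_dist_le_mul]
    intro z hz z' hz'
    rw [dist_eq_norm, Complex.dist_eq]
    calc ‖R z x - R z' x‖ ≤ K ^ 2 * ‖x‖ * ‖z - z'‖ := res_lip hK h x hz hz'
      _ ≤ (Real.toNNReal (K ^ 2 * ‖x‖) : ℝ) * ‖z - z'‖ := by
          apply mul_le_mul_of_nonneg_right (Real.le_coe_toNNReal _) (norm_nonneg _)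
  exact this.continuousOn



lemma bound_inv {R : E →L[ℂ] E} {z : ℂ} {K r : ℝ} (hr : 0 < r) (habs : r ≤ ‖z‖)
    (h : ∀ u : E, (1 + ‖z‖) * ‖R u‖ ≤ K * ‖u‖) (u : E) :
    ‖R u‖ ≤ (K * ‖u‖) * r⁻¹ := by
  have h1 : r * ‖R u‖ ≤ K * ‖u‖ := by
    calc r * ‖R u‖ ≤ (1 + ‖z‖) * ‖R u‖ := by
          apply mul_le_mul_of_nonneg_right _ (norm_nonneg _)
          linarith [norm_nonneg z]
      _ ≤ K * ‖u‖ := h u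
  rw [← div_eq_mul_inv, le_div_iff₀ hr]
  calc ‖R u‖ * r = r * ‖R u‖ := mul_comm _ _
    _ ≤ K * ‖u‖ := h1

lemma neg_r_exp' (r θ : ℝ) :
    -((r:ℂ) * Complex.exp ((θ:ℂ) * Complex.I)) =
      (r:ℂ) * Complex.exp (((θ + π : ℝ):ℂ) * Complex.I) := by
  have h : Complex.exp (((θ + π : ℝ):ℂ) * Complex.I) = -Complex.exp ((θ:ℂ) * Complex.I) := by
    push_cast
    rw [add_mul, Complex.exp_add, Complex.exp_pi_mul_I]
    ring
  rw [h]; ring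

lemma res_apply_continuousOn {R : ℂ → E →L[ℂ] E} {s : Set ℂ} {K : ℝ} (hK : 0 ≤ K)
    (h : ∀ z ∈ s, ResolventAt D A (R z) z ∧ ∀ u : E, (1 + ‖z‖) * ‖R z u‖ ≤ K * ‖u‖)
    {t : Set ℝ} {γ : ℝ → ℂ} {g : ℝ → E} (hγ : ContinuousOn γ t) (hγs : ∀ r ∈ t, γ r ∈ s)
    (hg : ContinuousOn g t) : ContinuousOn (fun r => R (γ r) (g r)) t := by
  intro r0 hr0
  have hc1 : ContinuousWithinAt (fun r => R (γ r) (g r0)) t r0 :=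
    ((res_continuousOn hK h (g r0)) (γ r0) (hγs r0 hr0)).comp (hγ r0 hr0) (fun r hr => hγs r hr)
  have h0 : Tendsto (fun r => R (γ r) (g r) - R (γ r) (g r0)) (𝓝[t] r0) (𝓝 0) := by
    apply squeeze_zero_norm'
        (a := fun r => K * ‖g r - g r0‖)
    · filter_upwards [self_mem_nhdsWithin] with r hr
      have he : R (γ r) (g r) - R (γ r) (g r0) = R (γ r) (g r - g r0) := by rw [map_sub]
      rw [he]
      exact bound_simple (h (γ r) (hγs r hr)).2 _
    · have h1 : Tendsto (fun r => g r - g r0) (𝓝[t] r0) (𝓝 (g r0 - g r0)) :=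
        (hg r0 hr0).sub continuousWithinAt_const
      rw [sub_self] at h1
      simpa using (h1.norm.const_mul K)
  have h2 := h0.add hc1
  have h3 : (fun r => R (γ r) (g r) - R (γ r) (g r0) + R (γ r) (g r0)) = fun r => R (γ r) (g r) := by
    funext r; abel
  rw [h3] at h2
  unfold ContinuousWithinAt
  simpa using h2

/-! contour geometry -/

lemma abs_r_exp (r θ : ℝ) : ‖(r:ℂ) * Complex.exp ((θ:ℂ) * Complex.I)‖ = |r| := by
  rw [norm_mul, Complex.norm_exp_ofReal_mul_I, Complex.norm_real, Real.norm_eq_abs, mul_one]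

lemma arg_r_exp {r θ : ℝ} (hr : 0 < r) (hθ : θ ∈ Set.Ioc (-π) π) :
    ((r:ℂ) * Complex.exp ((θ:ℂ) * Complex.I)).arg = θ := by
  rw [Complex.exp_mul_I]
  exact Complex.arg_mul_cos_add_sin_mul_I hr hθ

lemma neg_r_exp (r θ : ℝ) :
    -((r:ℂ) * Complex.exp ((θ:ℂ) * Complex.I)) =
      (r:ℂ) * Complex.exp (((θ - π : ℝ):ℂ) * Complex.I) := by
  have : Complex.exp (((θ - π : ℝ):ℂ) * Complex.I) = -Complex.exp ((θ:ℂ) * Complex.I) := by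
    push_cast
    rw [sub_mul, Complex.exp_sub, Complex.exp_pi_mul_I]
    field_simp
  rw [this]; ring

lemma im_r_exp (r θ : ℝ) : ((r:ℂ) * Complex.exp ((θ:ℂ) * Complex.I)).im = r * Real.sin θ := by
  rw [Complex.exp_mul_I]
  simp [Complex.mul_im, Complex.sin_ofReal_re, Complex.cos_ofReal_im, Complex.sin_ofReal_im]


lemma abs_cpow_le {z : ℂ} (hz : z ≠ 0) (s : ℂ) :
    ‖z ^ s‖ ≤ ‖z‖ ^ s.re * Real.exp (π * |s.im|) := by
  rw [Complex.norm_cpow_of_ne_zero hz, div_eq_mul_inv, ← Real.exp_neg]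
  apply mul_le_mul_of_nonneg_left _ (Real.rpow_nonneg (norm_nonneg z) _)
  apply Real.exp_le_exp.2
  calc -(z.arg * s.im) ≤ |z.arg * s.im| := neg_le_abs _
    _ = |z.arg| * |s.im| := abs_mul _ _
    _ ≤ π * |s.im| := by
        apply mul_le_mul_of_nonneg_right (Complex.abs_arg_le_pi z) (abs_nonneg _)

/-- Integrability of a continuous function dominated by `C * r^a`, `a < -1`, on `Ioi ρ`. -/
lemma integrableOn_of_rpow_bound {f : ℝ → E} {ρ C a : ℝ} (hρ : 0 < ρ) (ha : a < -1)
    (hcont : ContinuousOn f (Ioi ρ)) (hbound : ∀ r ∈ Ioi ρ, ‖f r‖ ≤ C * r ^ a) :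
    IntegrableOn f (Ioi ρ) := by
  have hg : IntegrableOn (fun r : ℝ => C * r ^ a) (Ioi ρ) :=
    (integrableOn_Ioi_rpow_of_lt ha hρ).const_mul C
  exact Integrable.mono' hg (hcont.aestronglyMeasurable measurableSet_Ioi)
    ((ae_restrict_iff' measurableSet_Ioi).2 (ae_of_all _ hbound))

/-- Integrability over the arc, via continuity on the compact `Icc`. -/
lemma integrableOn_arc {f : ℝ → E} {a b : ℝ}
    (hcont : ContinuousOn f (Icc a b)) : IntegrableOn f (Ioo a b) :=
  (hcont.integrableOn_compact isCompact_Icc).mono_set Ioo_subset_Icc_self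

section gamma
variable {ρ θ : ℝ} {f g : ℂ → E}

lemma gammaIntegral_congr
    (h1 : ∀ r ∈ Ioi ρ, f ((r : ℂ) * Complex.exp ((θ : ℂ) * Complex.I))
        = g ((r : ℂ) * Complex.exp ((θ : ℂ) * Complex.I)))
    (h2 : ∀ φ ∈ Ioo θ (2 * π - θ), f ((ρ : ℂ) * Complex.exp ((φ : ℂ) * Complex.I))
        = g ((ρ : ℂ) * Complex.exp ((φ : ℂ) * Complex.I)))
    (h3 : ∀ r ∈ Ioi ρ, f ((r : ℂ) * Complex.exp (-((θ : ℂ) * Complex.I)))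
        = g ((r : ℂ) * Complex.exp (-((θ : ℂ) * Complex.I)))) :
    gammaIntegral ρ θ f = gammaIntegral ρ θ g := by
  unfold gammaIntegral
  have e1 := setIntegral_congr_fun (μ := volume) measurableSet_Ioi h1
  have e3 := setIntegral_congr_fun (μ := volume) measurableSet_Ioi h3
  have e2 : (∫ φ in Ioo θ (2 * π - θ),
        Complex.exp ((φ : ℂ) * Complex.I) • f ((ρ : ℂ) * Complex.exp ((φ : ℂ) * Complex.I)))
      = ∫ φ in Ioo θ (2 * π - θ),
        Complex.exp ((φ : ℂ) * Complex.I) • g ((ρ : ℂ) * Complex.exp ((φ : ℂ) * Complex.I)) :=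
    setIntegral_congr_fun measurableSet_Ioo (fun φ hφ => by rw [h2 φ hφ])
  rw [e1, e2, e3]

def RayInt (ρ θ : ℝ) (f : ℂ → E) : Prop :=
  IntegrableOn (fun r : ℝ => f ((r : ℂ) * Complex.exp ((θ : ℂ) * Complex.I))) (Ioi ρ) ∧
  IntegrableOn (fun φ : ℝ => Complex.exp ((φ : ℂ) * Complex.I) •
      f ((ρ : ℂ) * Complex.exp ((φ : ℂ) * Complex.I))) (Ioo θ (2 * π - θ)) ∧
  IntegrableOn (fun r : ℝ => f ((r : ℂ) * Complex.exp (-((θ : ℂ) * Complex.I)))) (Ioi ρ)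

lemma gammaIntegral_sub (hf : RayInt ρ θ f) (hg : RayInt ρ θ g) :
    gammaIntegral ρ θ (fun l => f l - g l) = gammaIntegral ρ θ f - gammaIntegral ρ θ g := by
  unfold gammaIntegral
  rw [show (fun φ : ℝ => Complex.exp ((φ : ℂ) * Complex.I) •
        ((fun l => f l - g l) ((ρ : ℂ) * Complex.exp ((φ : ℂ) * Complex.I))))
      = (fun φ : ℝ => Complex.exp ((φ : ℂ) * Complex.I) •
          f ((ρ : ℂ) * Complex.exp ((φ : ℂ) * Complex.I)) -
        Complex.exp ((φ : ℂ) * Complex.I) •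
          g ((ρ : ℂ) * Complex.exp ((φ : ℂ) * Complex.I))) from funext fun φ => smul_sub _ _ _]
  rw [integral_sub hf.1 hg.1, integral_sub hf.2.1 hg.2.1, integral_sub hf.2.2 hg.2.2,
    smul_sub, smul_sub, smul_sub]
  abel

lemma gammaIntegral_comm (L : E →L[ℂ] E) (hf : RayInt ρ θ f) :
    L (gammaIntegral ρ θ f) = gammaIntegral ρ θ (fun l => L (f l)) := by
  unfold gammaIntegral
  rw [map_add, map_add, L.map_smul, L.map_smul, L.map_smul,
    ← L.integral_comp_comm hf.1, ← L.integral_comp_comm hf.2.1, ← L.integral_comp_comm hf.2.2]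
  congr 2
  · congr 1
    exact setIntegral_congr_fun measurableSet_Ioo fun φ _ => (L.map_smul _ _)

lemma RayInt.comp (L : E →L[ℂ] E) (hf : RayInt ρ θ f) : RayInt ρ θ (fun l => L (f l)) := by
  refine ⟨L.integrable_comp hf.1, ?_, L.integrable_comp hf.2.2⟩
  have := L.integrable_comp hf.2.1
  exact this.congr (ae_of_all _ fun φ => (L.map_smul _ _))


end gamma

/-- Integrability of `r ↦ (-(r e^{iψ}))^s • G(r e^{iψ})` on `Ioi ρ`. -/
lemma ray_piece {G : ℂ → E} {s : ℂ} {CG b ρ ψ : ℝ} (hρ : 0 < ρ) (hb : s.re + b < -1)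
    (hsin : Real.sin ψ ≠ 0)
    (hcont : ContinuousOn (fun r : ℝ => G ((r:ℂ) * Complex.exp ((ψ:ℂ) * Complex.I))) (Ioi ρ))
    (hbound : ∀ r ∈ Ioi ρ, ‖G ((r:ℂ) * Complex.exp ((ψ:ℂ) * Complex.I))‖ ≤ CG * r ^ b) :
    IntegrableOn (fun r : ℝ =>
      (-((r:ℂ) * Complex.exp ((ψ:ℂ) * Complex.I))) ^ s •
        G ((r:ℂ) * Complex.exp ((ψ:ℂ) * Complex.I))) (Ioi ρ) := by
  have hCG : 0 ≤ CG := by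
    have h := hbound (ρ + 1) (by simp only [mem_Ioi]; linarith)
    have h2 : (0:ℝ) ≤ CG * (ρ + 1) ^ b := le_trans (norm_nonneg _) h
    have h3 : (0:ℝ) < (ρ + 1) ^ b := Real.rpow_pos_of_pos (by linarith) b
    nlinarith
  apply integrableOn_of_rpow_bound (C := CG * Real.exp (π * |s.im|)) (a := s.re + b) hρ hb
  · apply ContinuousOn.smul _ hcont
    intro r hr
    have hr0 : 0 < r := lt_trans hρ hr
    apply ContinuousAt.continuousWithinAt
    apply ContinuousAt.comp (g := fun z : ℂ => z ^ s)
    · apply continuousAt_cpow_const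
      rw [Complex.mem_slitPlane_iff]
      right
      rw [Complex.neg_im, im_r_exp]
      simp only [ne_eq, neg_eq_zero, mul_eq_zero, not_or]
      exact ⟨ne_of_gt hr0, hsin⟩
    · exact ((Complex.continuous_ofReal.mul continuous_const).neg).continuousAt
  · intro r hr
    have hr0 : 0 < r := lt_trans hρ hr
    have habs : ‖-((r:ℂ) * Complex.exp ((ψ:ℂ) * Complex.I))‖ = r := by
      rw [norm_neg, abs_r_exp, abs_of_pos hr0]
    have hne : -((r:ℂ) * Complex.exp ((ψ:ℂ) * Complex.I)) ≠ 0 := by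
      intro h; rw [h] at habs; simp at habs; exact ne_of_gt hr0 habs.symm
    rw [norm_smul]
    have hc1 : ‖(-((r:ℂ) * Complex.exp ((ψ:ℂ) * Complex.I))) ^ s‖
        ≤ r ^ s.re * Real.exp (π * |s.im|) := by
      have := abs_cpow_le hne s
      rwa [habs] at this
    have hfinal : ‖(-((r:ℂ) * Complex.exp ((ψ:ℂ) * Complex.I))) ^ s‖ *
        ‖G ((r:ℂ) * Complex.exp ((ψ:ℂ) * Complex.I))‖
        ≤ (r ^ s.re * Real.exp (π * |s.im|)) * (CG * r ^ b) :=
      mul_le_mul hc1 (hbound r hr) (norm_nonneg _) (by positivity)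
    calc ‖(-((r:ℂ) * Complex.exp ((ψ:ℂ) * Complex.I))) ^ s‖ *
          ‖G ((r:ℂ) * Complex.exp ((ψ:ℂ) * Complex.I))‖
        ≤ (r ^ s.re * Real.exp (π * |s.im|)) * (CG * r ^ b) := hfinal
      _ = CG * Real.exp (π * |s.im|) * r ^ (s.re + b) := by
          rw [Real.rpow_add hr0]; ring
  
/-- Integrability of the arc piece. -/
lemma arc_piece {G : ℂ → E} {s : ℂ} {ρ θ : ℝ} (hρ : 0 < ρ) (hθ0 : 0 < θ) (hθπ : θ < π)
    (hcont : ContinuousOn (fun φ : ℝ => G ((ρ:ℂ) * Complex.exp ((φ:ℂ) * Complex.I)))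
      (Icc θ (2 * π - θ))) :
    IntegrableOn (fun φ : ℝ => Complex.exp ((φ:ℂ) * Complex.I) •
      ((-((ρ:ℂ) * Complex.exp ((φ:ℂ) * Complex.I))) ^ s •
        G ((ρ:ℂ) * Complex.exp ((φ:ℂ) * Complex.I)))) (Ioo θ (2 * π - θ)) := by
  apply integrableOn_arc
  apply ContinuousOn.smul
  · exact (Complex.continuous_exp.comp (Complex.continuous_ofReal.mul continuous_const)).continuousOn
  apply ContinuousOn.smul _ hcont
  intro φ hφ
  have hφ0 : 0 < φ := lt_of_lt_of_le hθ0 hφ.1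
  have hφ2 : φ < 2 * π := by
    have := hφ.2; linarith
  apply ContinuousAt.continuousWithinAt
  apply ContinuousAt.comp (g := fun z : ℂ => z ^ s)
  · apply continuousAt_cpow_const
    rw [Complex.mem_slitPlane_iff]
    by_cases hsin : Real.sin φ = 0
    · left
      have hφπ : φ = π := by
        rcases Real.sin_eq_zero_iff.1 hsin with ⟨n, hn⟩
        have hπ := Real.pi_pos
        have hn1 : n = 1 := by
          have h1 : 0 < (n:ℝ) * π := hn ▸ hφ0
          have h2 : (n:ℝ) * π < 2 * π := hn ▸ hφ2
          have ha : (0:ℝ) < (n:ℝ) := by nlinarith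
          have hb2 : (n:ℝ) < 2 := by nlinarith
          have h3 : (0:ℤ) < n := by exact_mod_cast ha
          have h4 : n < (2:ℤ) := by exact_mod_cast hb2
          omega
        rw [← hn, hn1]; simp
      rw [Complex.neg_re]
      have : ((ρ:ℂ) * Complex.exp ((φ:ℂ) * Complex.I)).re = ρ * Real.cos φ := by
        rw [Complex.exp_mul_I]
        simp [Complex.mul_re, Complex.cos_ofReal_re, Complex.sin_ofReal_im, Complex.cos_ofReal_im,
          Complex.sin_ofReal_re]
      rw [this, hφπ]
      simp [Real.cos_pi]
      linarith
    · right
      rw [Complex.neg_im, im_r_exp]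
      simp only [ne_eq, neg_eq_zero, mul_eq_zero, not_or]
      exact ⟨ne_of_gt hρ, hsin⟩
  · exact ((continuous_const.mul (Complex.continuous_exp.comp
      (Complex.continuous_ofReal.mul continuous_const))).neg).continuousAt


end ACL

/-- equation (2.4) in the proof of Theorem 2.6: for `Re w < 0` and `ρ > 0`
(small enough that the closed disc of radius `ρ` is in the resolvent set of `-B`, hypothesis
`hBdisc`), the operator `L = (1/2πi) ∫_{Γ_{ρ,θ_B}} (A-λ)⁻¹(B+λ)⁻¹ (-λ)^w dλ` maps into `D(A)`
and `A L = B^w - (1/2πi) ∫_{Γ_{ρ,θ_B}} (A-λ)⁻¹(B+λ)⁻¹ (-λ)^{1+w} dλ`. -/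
theorem A_comp_L_representation
    {E : Type*} [NormedAddCommGroup E] [NormedSpace ℂ E] [CompleteSpace E]
    (DA DB : Submodule ℂ E) (A : DA →ₗ[ℂ] E) (B : DB →ₗ[ℂ] E)
    (θA θB KA KB : ℝ) (RA RB : ℂ → E →L[ℂ] E)
    (hθA : θA < π) (hθB0 : 0 < θB) (hθB : θB < π) (hsum : π < θA + θB)
    (hA : SectorialWith DA A θA KA RA) (hB : SectorialWith DB B θB KB RB)
    (hcomm : ∀ z ∈ SectorSet θA, ∀ w ∈ SectorSet θB, ∀ u : E, RA z (RB w u) = RB w (RA z u))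
    (w : ℂ) (hw : w.re < 0) (ρ : ℝ) (hρ : 0 < ρ)
    (hBdisc : ∀ z : ℂ, ‖z‖ ≤ ρ → ResolventAt DB B (RB z) z ∧
      ∀ u : E, (1 + ‖z‖) * ‖RB z u‖ ≤ (2 * KB + 1) * ‖u‖) :
    ∀ u : E, ∃ v : DA,
      (v : E) = (2 * (π : ℂ) * Complex.I)⁻¹ •
          gammaIntegral ρ θB (fun l => ((-l) ^ w) • RA (-l) (RB l u)) ∧
      A v = (2 * (π : ℂ) * Complex.I)⁻¹ •
            gammaIntegral ρ θB (fun l => ((-l) ^ w) • RB l u) -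
          (2 * (π : ℂ) * Complex.I)⁻¹ •
            gammaIntegral ρ θB (fun l => ((-l) ^ (1 + w)) • RA (-l) (RB l u)) := by
  intro u
  have hπ := Real.pi_pos
  have hθA0 : 0 < θA := by linarith
  have hKA1 : 1 ≤ KA := hA.1
  have hKA0 : 0 ≤ KA := by linarith
  have hKB1 : 1 ≤ KB := hB.1
  have hKB'0 : (0:ℝ) ≤ 2 * KB + 1 := by linarith
  have hRA := hA.2.2.2
  set SB : Set ℂ := SectorSet θB ∪ {z : ℂ | ‖z‖ ≤ ρ} with hSBdef
  have hRB : ∀ z ∈ SB, ResolventAt DB B (RB z) z ∧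
      ∀ u' : E, (1 + ‖z‖) * ‖RB z u'‖ ≤ (2 * KB + 1) * ‖u'‖ := by
    intro z hz
    rcases hz with hz | hz
    · obtain ⟨h1, h2⟩ := hB.2.2.2 z hz
      exact ⟨h1, fun u' => le_trans (h2 u') (by nlinarith [norm_nonneg u'])⟩
    · exact hBdisc z hz
  have h0mem : (0:ℂ) ∈ SectorSet θA := by
    simp only [SectorSet, Set.mem_setOf_eq, Complex.arg_zero, abs_zero]
    linarith
  obtain ⟨hres0, -⟩ := hRA 0 h0mem
  have hsinθB : Real.sin θB ≠ 0 := ne_of_gt (Real.sin_pos_of_pos_of_lt_pi hθB0 hθB)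
  have hsinnegθB : Real.sin (-θB) ≠ 0 := by
    rw [Real.sin_neg]; simpa using hsinθB
  have hexpneg : Complex.exp (-((θB:ℂ) * Complex.I))
      = Complex.exp ((((-θB : ℝ) : ℝ):ℂ) * Complex.I) := by
    congr 1; push_cast; ring
  have hlne : ∀ (r ψ : ℝ), 0 < r → ((r:ℂ) * Complex.exp ((ψ:ℂ) * Complex.I)) ≠ 0 := by
    intro r ψ hr h
    have h2 := ACL.abs_r_exp r ψ
    rw [h, norm_zero, abs_of_pos hr] at h2
    exact (ne_of_lt hr) h2
  -- memberships
  have memB1 : ∀ r : ℝ, 0 < r → ((r:ℂ) * Complex.exp ((θB:ℂ) * Complex.I)) ∈ SB := by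
    intro r hr
    left
    simp only [SectorSet, Set.mem_setOf_eq]
    rw [ACL.arg_r_exp hr ⟨by linarith, le_of_lt hθB⟩, abs_of_pos hθB0]
  have memA1 : ∀ r : ℝ, 0 < r →
      -((r:ℂ) * Complex.exp ((θB:ℂ) * Complex.I)) ∈ SectorSet θA := by
    intro r hr
    rw [ACL.neg_r_exp]
    simp only [SectorSet, Set.mem_setOf_eq]
    rw [ACL.arg_r_exp hr ⟨by linarith, by linarith⟩, abs_of_neg (by linarith)]
    linarith
  have memB2 : ∀ r : ℝ, 0 < r →
      ((r:ℂ) * Complex.exp ((((-θB : ℝ)):ℂ) * Complex.I)) ∈ SB := by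
    intro r hr
    left
    simp only [SectorSet, Set.mem_setOf_eq]
    rw [ACL.arg_r_exp hr ⟨by linarith, by linarith⟩, abs_of_neg (by linarith)]
    linarith
  have memA2 : ∀ r : ℝ, 0 < r →
      -((r:ℂ) * Complex.exp ((((-θB : ℝ)):ℂ) * Complex.I)) ∈ SectorSet θA := by
    intro r hr
    rw [ACL.neg_r_exp']
    simp only [SectorSet, Set.mem_setOf_eq]
    rw [ACL.arg_r_exp hr ⟨by linarith, by linarith⟩, abs_of_pos (by linarith)]
    linarith
  have memB3 : ∀ φ : ℝ, ((ρ:ℂ) * Complex.exp ((φ:ℂ) * Complex.I)) ∈ SB := by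
    intro φ
    right
    simp only [Set.mem_setOf_eq]
    rw [ACL.abs_r_exp, abs_of_pos hρ]
  have memA3 : ∀ φ ∈ Icc θB (2 * π - θB),
      -((ρ:ℂ) * Complex.exp ((φ:ℂ) * Complex.I)) ∈ SectorSet θA := by
    intro φ hφ
    rw [ACL.neg_r_exp]
    simp only [SectorSet, Set.mem_setOf_eq]
    rw [ACL.arg_r_exp hρ ⟨by linarith [hφ.1], by linarith [hφ.2]⟩, abs_le]
    exact ⟨by linarith [hφ.1], by linarith [hφ.2]⟩
  -- curves
  have hcurve1 : Continuous (fun r : ℝ => (r:ℂ) * Complex.exp ((θB:ℂ) * Complex.I)) :=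
    Complex.continuous_ofReal.mul continuous_const
  have hcurve2 : Continuous (fun r : ℝ => (r:ℂ) * Complex.exp ((((-θB : ℝ)):ℂ) * Complex.I)) :=
    Complex.continuous_ofReal.mul continuous_const
  have hcurve3 : Continuous (fun φ : ℝ => (ρ:ℂ) * Complex.exp ((φ:ℂ) * Complex.I)) :=
    continuous_const.mul (Complex.continuous_exp.comp
      (Complex.continuous_ofReal.mul continuous_const))
  -- continuity of the integrand cores along curves
  have hContG1 : ∀ {t : Set ℝ} {γ : ℝ → ℂ}, ContinuousOn γ t → (∀ x ∈ t, γ x ∈ SB) →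
      ContinuousOn (fun x => RB (γ x) u) t := by
    intro t γ hγ hm
    have := (ACL.res_continuousOn hKB'0 hRB u).comp hγ hm
    exact this
  have hContG2 : ∀ {t : Set ℝ} {γ : ℝ → ℂ}, ContinuousOn γ t → (∀ x ∈ t, γ x ∈ SB) →
      (∀ x ∈ t, -(γ x) ∈ SectorSet θA) →
      ContinuousOn (fun x => RA (-(γ x)) (RB (γ x) u)) t := by
    intro t γ hγ hm hmA
    exact ACL.res_apply_continuousOn hKA0 hRA hγ.neg hmA (hContG1 hγ hm)
  -- bounds along rays
  have hb1 : ∀ ψ : ℝ, (∀ r : ℝ, 0 < r → ((r:ℂ) * Complex.exp ((ψ:ℂ) * Complex.I)) ∈ SB) →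
      ∀ r ∈ Ioi ρ, ‖RB ((r:ℂ) * Complex.exp ((ψ:ℂ) * Complex.I)) u‖
        ≤ ((2 * KB + 1) * ‖u‖) * r ^ (-1:ℝ) := by
    intro ψ hmem r hr
    have hr0 : 0 < r := lt_trans hρ hr
    have habs : r ≤ ‖(r:ℂ) * Complex.exp ((ψ:ℂ) * Complex.I)‖ := by
      rw [ACL.abs_r_exp, abs_of_pos hr0]
    rw [Real.rpow_neg_one]
    exact ACL.bound_inv hr0 habs (hRB _ (hmem r hr0)).2 u
  have hb2 : ∀ ψ : ℝ, (∀ r : ℝ, 0 < r → ((r:ℂ) * Complex.exp ((ψ:ℂ) * Complex.I)) ∈ SB) →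
      (∀ r : ℝ, 0 < r → -((r:ℂ) * Complex.exp ((ψ:ℂ) * Complex.I)) ∈ SectorSet θA) →
      ∀ r ∈ Ioi ρ, ‖RA (-((r:ℂ) * Complex.exp ((ψ:ℂ) * Complex.I)))
          (RB ((r:ℂ) * Complex.exp ((ψ:ℂ) * Complex.I)) u)‖
        ≤ (KA * ((2 * KB + 1) * ‖u‖)) * r ^ (-2:ℝ) := by
    intro ψ hmem hmemA r hr
    have hr0 : 0 < r := lt_trans hρ hr
    have habs : r ≤ ‖(r:ℂ) * Complex.exp ((ψ:ℂ) * Complex.I)‖ := by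
      rw [ACL.abs_r_exp, abs_of_pos hr0]
    have habsneg : r ≤ ‖-((r:ℂ) * Complex.exp ((ψ:ℂ) * Complex.I))‖ := by
      rw [norm_neg, ACL.abs_r_exp, abs_of_pos hr0]
    have h1 := ACL.bound_inv hr0 habsneg (hRA _ (hmemA r hr0)).2
      (RB ((r:ℂ) * Complex.exp ((ψ:ℂ) * Complex.I)) u)
    have h2 := ACL.bound_inv hr0 habs (hRB _ (hmem r hr0)).2 u
    have hrw : r ^ (-2:ℝ) = r⁻¹ * r⁻¹ := by
      rw [show (-2:ℝ) = (-1) + (-1) by norm_num, Real.rpow_add hr0, Real.rpow_neg_one]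
    calc ‖RA (-((r:ℂ) * Complex.exp ((ψ:ℂ) * Complex.I)))
          (RB ((r:ℂ) * Complex.exp ((ψ:ℂ) * Complex.I)) u)‖
        ≤ (KA * ‖RB ((r:ℂ) * Complex.exp ((ψ:ℂ) * Complex.I)) u‖) * r⁻¹ := h1
      _ ≤ (KA * (((2 * KB + 1) * ‖u‖) * r⁻¹)) * r⁻¹ := by
          apply mul_le_mul_of_nonneg_right
            (mul_le_mul_of_nonneg_left h2 hKA0) (inv_nonneg.2 hr0.le)
      _ = (KA * ((2 * KB + 1) * ‖u‖)) * r ^ (-2:ℝ) := by rw [hrw]; ring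
  -- integrability
  have hw1 : w.re + (-1) < -1 := by linarith
  have hw2 : (1 + w).re + (-2) < -1 := by
    simp only [Complex.add_re, Complex.one_re]
    linarith
  have hint1 : ACL.RayInt ρ θB (fun l => ((-l) ^ w) • RB l u) := by
    refine ⟨?_, ?_, ?_⟩
    · exact ACL.ray_piece (G := fun l => RB l u) (s := w) (b := -1)
        (CG := (2 * KB + 1) * ‖u‖) hρ hw1 hsinθB
        (hContG1 hcurve1.continuousOn (fun r hr => memB1 r (lt_trans hρ hr)))
        (hb1 θB memB1)
    · exact ACL.arc_piece (G := fun l => RB l u) (s := w) hρ hθB0 hθB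
        (hContG1 hcurve3.continuousOn (fun φ _ => memB3 φ))
    · simp only [hexpneg]
      exact ACL.ray_piece (G := fun l => RB l u) (s := w) (b := -1)
        (CG := (2 * KB + 1) * ‖u‖) hρ hw1 hsinnegθB
        (hContG1 hcurve2.continuousOn (fun r hr => memB2 r (lt_trans hρ hr)))
        (hb1 (-θB) memB2)
  have hint2 : ACL.RayInt ρ θB (fun l => ((-l) ^ (1 + w)) • RA (-l) (RB l u)) := by
    refine ⟨?_, ?_, ?_⟩
    · exact ACL.ray_piece (G := fun l => RA (-l) (RB l u)) (s := 1 + w) (b := -2)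
        (CG := KA * ((2 * KB + 1) * ‖u‖)) hρ hw2 hsinθB
        (hContG2 hcurve1.continuousOn (fun r hr => memB1 r (lt_trans hρ hr))
          (fun r hr => memA1 r (lt_trans hρ hr)))
        (hb2 θB memB1 memA1)
    · exact ACL.arc_piece (G := fun l => RA (-l) (RB l u)) (s := 1 + w) hρ hθB0 hθB
        (hContG2 hcurve3.continuousOn (fun φ _ => memB3 φ) memA3)
    · simp only [hexpneg]
      exact ACL.ray_piece (G := fun l => RA (-l) (RB l u)) (s := 1 + w) (b := -2)
        (CG := KA * ((2 * KB + 1) * ‖u‖)) hρ hw2 hsinnegθB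
        (hContG2 hcurve2.continuousOn (fun r hr => memB2 r (lt_trans hρ hr))
          (fun r hr => memA2 r (lt_trans hρ hr)))
        (hb2 (-θB) memB2 memA2)
  -- build v
  obtain ⟨v, hv1, hv2⟩ := hres0.1
    ((2 * (π : ℂ) * Complex.I)⁻¹ •
        gammaIntegral ρ θB (fun l => ((-l) ^ w) • RB l u) -
      (2 * (π : ℂ) * Complex.I)⁻¹ •
        gammaIntegral ρ θB (fun l => ((-l) ^ (1 + w)) • RA (-l) (RB l u)))
  refine ⟨v, ?_, ?_⟩
  · rw [hv1, map_sub, _root_.map_smul, _root_.map_smul,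
      ACL.gammaIntegral_comm (RA 0) hint1, ACL.gammaIntegral_comm (RA 0) hint2, ← smul_sub,
      ← ACL.gammaIntegral_sub (hint1.comp (RA 0)) (hint2.comp (RA 0))]
    congr 1
    apply ACL.gammaIntegral_congr
    · intro r hr
      have hr0 : 0 < r := lt_trans hρ hr
      exact ACL.key_pointwise hres0 (hlne r θB hr0) (hRA _ (memA1 r hr0)).1 w (RB _ u)
    · intro φ hφ
      exact ACL.key_pointwise hres0 (hlne ρ φ hρ)
        (hRA _ (memA3 φ ⟨le_of_lt hφ.1, le_of_lt hφ.2⟩)).1 w (RB _ u)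
    · intro r hr
      have hr0 : 0 < r := lt_trans hρ hr
      simp only [hexpneg]
      exact ACL.key_pointwise hres0 (hlne r (-θB) hr0) (hRA _ (memA2 r hr0)).1 w (RB _ u)
  · rw [zero_smul, add_zero] at hv2
    exact hv2
end
end

section
/- Let E be a complex Banach space and p ∈ (1,∞). Assume there is C_H > 0 such that for every ε ∈ (0,π) and every f ∈ L^p(ℝ;E) vanishing a.e. outside (−2π,2π), ‖t ↦ ∫_{ε≤|s|≤π} f(t−s)/s ds‖_{L^p((−π,π);E)} ≤ C_H ‖f‖_{L^p(ℝ;E)}. Let U : ℝ → L(E) be strongly measurable with U(0) = I, U(s+t) = U(s)U(t) for all s,t ∈ ℝ, and M := sup_{|s|≤π} ‖U(s)‖ < ∞. Then there exists a constant C depending only on p, C_H and M such that for every r ∈ (0,1], every ε ∈ (0,π), every n ∈ ℕ and all x_0,…,x_n ∈ E: ‖t ↦ ∫_{ε≤|s|≤π} (1/s) Σ_{k=0}^n e^{ikt} (re^{−k})^{−is} U(s) x_k ds‖_{L^p((0,2π);E)} ≤ C ‖t ↦ Σ_{k=0}^n e^{ikt} x_k‖_{L^p((0,2π);E)}. -/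
open Complex MeasureTheory Real Set Filter

noncomputable section

set_option maxHeartbeats 2000000 in
/-- estimate (2.11), the Hilbert-transform step in the proof of Theorem 2.8:
if the truncated Hilbert transform is uniformly bounded on `L^p(ℝ; E)` (hypothesis `hHilb`,
encoding the UMD property) then there is `C > 0`, depending only on `p`, `C_H` and `M`, such
that for every strongly measurable multiplicative family `U` with `U(0) = I` and
`sup_{|s| ≤ π} ‖U(s)‖ ≤ M`, every `r ∈ (0,1]`, `ε ∈ (0,π)`, `n ∈ ℕ` and `x_0, …, x_n ∈ E`:
`‖t ↦ ∫_{ε≤|s|≤π} (1/s) Σ_k e^{ikt} (re^{-k})^{-is} U(s)x_k ds‖_{L^p(0,2π;E)}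
  ≤ C ‖t ↦ Σ_k e^{ikt} x_k‖_{L^p(0,2π;E)}`. -/
theorem truncated_hilbert_transform_step
    {E : Type*} [NormedAddCommGroup E] [NormedSpace ℂ E] [CompleteSpace E]
    (p : ℝ) (hp : 1 < p) (CH : ℝ) (hCH : 0 < CH)
    (hHilb : ∀ ε : ℝ, 0 < ε → ε < π → ∀ f : ℝ → E,
      MemLp f (ENNReal.ofReal p) volume →
      (∀ᵐ t : ℝ, t ∉ Ioo (-(2 * π)) (2 * π) → f t = 0) →
      eLpNorm (fun t : ℝ => ∫ s in {s : ℝ | ε ≤ |s| ∧ |s| ≤ π}, (s⁻¹ : ℝ) • f (t - s))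
          (ENNReal.ofReal p) (volume.restrict (Ioo (-π) π))
        ≤ ENNReal.ofReal CH * eLpNorm f (ENNReal.ofReal p) volume)
    (M : ℝ) (hM : 0 ≤ M) :
    ∃ C : ℝ, 0 < C ∧ ∀ U : ℝ → E →L[ℂ] E,
      (∀ x : E, StronglyMeasurable fun s : ℝ => U s x) →
      U 0 = ContinuousLinearMap.id ℂ E →
      (∀ s t : ℝ, U (s + t) = (U s).comp (U t)) →
      (∀ s : ℝ, |s| ≤ π → ∀ x : E, ‖U s x‖ ≤ M * ‖x‖) →
      ∀ r : ℝ, 0 < r → r ≤ 1 → ∀ ε : ℝ, 0 < ε → ε < π → ∀ n : ℕ, ∀ x : ℕ → E,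
        eLpNorm (fun t : ℝ => ∫ s in {s : ℝ | ε ≤ |s| ∧ |s| ≤ π},
            (s⁻¹ : ℝ) • ∑ k ∈ Finset.range (n + 1),
              (Complex.exp ((k : ℂ) * (t : ℂ) * Complex.I) *
                Complex.exp (-(s : ℂ) * Complex.I * ((Real.log r : ℂ) - (k : ℂ)))) •
                U s (x k))
          (ENNReal.ofReal p) (volume.restrict (Ioo (0 : ℝ) (2 * π)))
        ≤ ENNReal.ofReal C *
          eLpNorm (fun t : ℝ => ∑ k ∈ Finset.range (n + 1),
              Complex.exp ((k : ℂ) * (t : ℂ) * Complex.I) • x k)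
            (ENNReal.ofReal p) (volume.restrict (Ioo (0 : ℝ) (2 * π))) := by
  have hπ := Real.pi_pos
  have hp0 : (0 : ℝ) < p := by linarith
  set q : ENNReal := ENNReal.ofReal p with hq
  have hq0 : q ≠ 0 := by
    simp only [hq, ne_eq, ENNReal.ofReal_eq_zero, not_le]; linarith
  have hqt : q ≠ ⊤ := ENNReal.ofReal_ne_top
  have hqr : q.toReal = p := by rw [hq, ENNReal.toReal_ofReal hp0.le]
  refine ⟨3 * CH * (M + 1) ^ 5, by positivity, ?_⟩
  intro U hUmeas hU0 hgroup hUb r hr hr1 ε hε hεπ n x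
  set N := M + 1 with hN
  have hN1 : (1 : ℝ) ≤ N := by simp [hN]; linarith
  have hN0 : (0 : ℝ) < N := by linarith
  have hU' : ∀ s : ℝ, |s| ≤ π → ∀ y : E, ‖U s y‖ ≤ N * ‖y‖ := fun s hs y =>
    (hUb s hs y).trans (by nlinarith [norm_nonneg y])
  have hU3 : ∀ σ : ℝ, |σ| ≤ 3 * π → ∀ y : E, ‖U σ y‖ ≤ N ^ 3 * ‖y‖ := by
    intro σ hσ y
    have h3 : |σ / 3| ≤ π := by
      rw [abs_div, abs_of_pos (by norm_num : (0:ℝ) < 3)]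
      linarith
    have hdec : U σ = (U (σ/3)).comp ((U (σ/3)).comp (U (σ/3))) := by
      rw [← hgroup, ← hgroup, show σ/3 + (σ/3 + σ/3) = σ from by ring]
    rw [hdec]
    simp only [ContinuousLinearMap.comp_apply]
    calc ‖U (σ/3) ((U (σ/3)) ((U (σ/3)) y))‖ ≤ N * ‖(U (σ/3)) ((U (σ/3)) y)‖ := hU' _ h3 _
      _ ≤ N * (N * ‖(U (σ/3)) y‖) :=
          mul_le_mul_of_nonneg_left (hU' _ h3 _) (by linarith)
      _ ≤ N * (N * (N * ‖y‖)) :=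
          mul_le_mul_of_nonneg_left
            (mul_le_mul_of_nonneg_left (hU' _ h3 y) (by linarith)) (by linarith)
      _ = N ^ 3 * ‖y‖ := by ring
  set K := {s : ℝ | ε ≤ |s| ∧ |s| ≤ π} with hK
  have hKmeas : MeasurableSet K := by
    have hKeq : K = (fun s : ℝ => |s|) ⁻¹' (Icc ε π) := rfl
    rw [hKeq]
    exact continuous_abs.measurable measurableSet_Icc
  have hKsub : K ⊆ Icc (-π) π := fun s hs => abs_le.1 hs.2
  have hKfin : volume K < ⊤ :=
    lt_of_le_of_lt (measure_mono hKsub) (by rw [Real.volume_Icc]; exact ENNReal.ofReal_lt_top)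
  haveI hKfm : IsFiniteMeasure (volume.restrict K) :=
    ⟨by rwa [Measure.restrict_apply_univ]⟩
  set F := (fun t : ℝ => ∑ k ∈ Finset.range (n + 1),
      Complex.exp ((k : ℂ) * (t : ℂ) * Complex.I) • x k) with hF
  have hFcont : Continuous F := by
    rw [hF]
    refine continuous_finset_sum _ fun k _ => Continuous.smul ?_ continuous_const
    exact Complex.continuous_exp.comp (by continuity)
  have hexp1 : ∀ z : ℂ, z.re = 0 → ‖Complex.exp z‖ = 1 := by
    intro z hz
    rw [Complex.norm_exp, hz, Real.exp_zero]
  set B := ∑ k ∈ Finset.range (n + 1), ‖x k‖ with hB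
  have hBnn : 0 ≤ B := Finset.sum_nonneg fun _ _ => norm_nonneg _
  have hFle : ∀ σ : ℝ, ‖F σ‖ ≤ B := by
    intro σ
    rw [hF, hB]
    refine (norm_sum_le _ _).trans (Finset.sum_le_sum fun k _ => ?_)
    rw [norm_smul, hexp1 _ (by simp), one_mul]
  set g := (fun σ : ℝ =>
      Complex.exp (-(σ : ℂ) * Complex.I * (Real.log r : ℂ)) • U σ (F σ)) with hg
  have hUF : (fun σ : ℝ => U σ (F σ))
      = fun σ : ℝ => ∑ k ∈ Finset.range (n + 1),
          Complex.exp ((k : ℂ) * (σ : ℂ) * Complex.I) • U σ (x k) := by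
    funext σ
    rw [hF, map_sum]
    exact Finset.sum_congr rfl fun k _ => (U σ).map_smul _ _
  have hgmeas : StronglyMeasurable g := by
    rw [hg]
    refine StronglyMeasurable.smul ?_ ?_
    · exact (Complex.continuous_exp.comp (by continuity)).stronglyMeasurable
    · rw [hUF]
      exact Finset.stronglyMeasurable_fun_sum _ fun k _ =>
        ((Complex.continuous_exp.comp (by continuity)).stronglyMeasurable).smul (hUmeas (x k))
  have hgle : ∀ σ : ℝ, σ ∈ Ioo (-π) (3 * π) → ‖g σ‖ ≤ N ^ 3 * ‖F σ‖ := by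
    intro σ hσ
    rw [hg]
    simp only
    rw [norm_smul, hexp1 _ (by simp), one_mul]
    exact hU3 σ (abs_le.2 ⟨by linarith [hσ.1], by linarith [hσ.2]⟩) _
  set f := Set.indicator (Ioo (-(2 * π)) (2 * π)) (fun v : ℝ => g (π - v)) with hf
  have hfmeas : StronglyMeasurable f :=
    (hgmeas.comp_measurable (measurable_const.sub measurable_id)).indicator measurableSet_Ioo
  have hfle : ∀ u : ℝ, ‖f u‖ ≤ N ^ 3 * B := by
    intro u
    rw [hf]
    by_cases hu : u ∈ Ioo (-(2 * π)) (2 * π)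
    · rw [Set.indicator_of_mem hu]
      have hmemu : π - u ∈ Ioo (-π) (3 * π) := ⟨by linarith [hu.2], by linarith [hu.1]⟩
      exact (hgle _ hmemu).trans
        (mul_le_mul_of_nonneg_left (hFle (π - u)) (by positivity))
    · rw [Set.indicator_of_notMem hu, norm_zero]
      positivity
  have hfmem : MemLp f q volume := by
    refine ⟨hfmeas.aestronglyMeasurable, ?_⟩
    rw [hf, eLpNorm_indicator_eq_eLpNorm_restrict measurableSet_Ioo]
    refine lt_of_le_of_lt (eLpNorm_le_of_ae_bound (C := N ^ 3 * B)
      ((ae_restrict_iff' measurableSet_Ioo).2 (ae_of_all _ fun u hu => ?_))) ?_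
    · have hmemu : π - u ∈ Ioo (-π) (3 * π) := ⟨by linarith [hu.2], by linarith [hu.1]⟩
      exact (hgle _ hmemu).trans
        (mul_le_mul_of_nonneg_left (hFle (π - u)) (by positivity))
    · refine ENNReal.mul_lt_top ?_ ENNReal.ofReal_lt_top
      refine ENNReal.rpow_lt_top_of_nonneg (by positivity) ?_
      rw [Measure.restrict_apply_univ, Real.volume_Ioo]
      exact ENNReal.ofReal_ne_top
  have hfsupp : ∀ᵐ u : ℝ, u ∉ Ioo (-(2 * π)) (2 * π) → f u = 0 :=
    ae_of_all _ fun u hu => by rw [hf, Set.indicator_of_notMem hu]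
  set Hf := (fun τ : ℝ => ∫ s in K, (s⁻¹ : ℝ) • f (τ - s)) with hHf
  have hHfmeas : StronglyMeasurable Hf := by
    rw [hHf]
    have h2 : StronglyMeasurable (fun z : ℝ × ℝ => (z.2⁻¹ : ℝ) • f (z.1 - z.2)) :=
      (measurable_snd.inv.stronglyMeasurable).smul
        (hfmeas.comp_measurable (measurable_fst.sub measurable_snd))
    exact h2.integral_prod_right'
  have hHilb' : eLpNorm Hf q (volume.restrict (Ioo (-π) π))
      ≤ ENNReal.ofReal CH * eLpNorm f q volume := by
    have h := hHilb ε hε hεπ f hfmem hfsupp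
    rw [hHf]
    exact h
  -- measure preserving machinery for t ↦ π - t
  have mp_base : MeasurePreserving (fun t : ℝ => π - t) volume volume :=
    Measure.measurePreserving_sub_left volume π
  have hpre1 : (fun t : ℝ => π - t) ⁻¹' (Ioo (-π) π) = Ioo 0 (2 * π) := by
    ext t
    simp only [mem_preimage, mem_Ioo]
    constructor <;> (rintro ⟨a, b⟩; constructor <;> linarith)
  have hpre2 : (fun t : ℝ => π - t) ⁻¹' (Ioo (-π) (3 * π)) = Ioo (-(2 * π)) (2 * π) := by
    ext t
    simp only [mem_preimage, mem_Ioo]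
    constructor <;> (rintro ⟨a, b⟩; constructor <;> linarith)
  have hmp1 : MeasurePreserving (fun t : ℝ => π - t)
      (volume.restrict (Ioo 0 (2 * π))) (volume.restrict (Ioo (-π) π)) := by
    have := mp_base.restrict_preimage (measurableSet_Ioo (a := -π) (b := π))
    rwa [hpre1] at this
  have hmp2 : MeasurePreserving (fun t : ℝ => π - t)
      (volume.restrict (Ioo (-(2 * π)) (2 * π))) (volume.restrict (Ioo (-π) (3 * π))) := by
    have := mp_base.restrict_preimage (measurableSet_Ioo (a := -π) (b := 3 * π))
    rwa [hpre2] at this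
  -- the key pointwise identity
  have key : ∀ t ∈ Ioo (0 : ℝ) (2 * π),
      (∫ s in K, (s⁻¹ : ℝ) • ∑ k ∈ Finset.range (n + 1),
        (Complex.exp ((k : ℂ) * (t : ℂ) * Complex.I) *
          Complex.exp (-(s : ℂ) * Complex.I * ((Real.log r : ℂ) - (k : ℂ)))) •
          U s (x k))
      = Complex.exp ((t : ℂ) * Complex.I * (Real.log r : ℂ)) • U (-t) (Hf (π - t)) := by
    intro t ht
    have hint : Integrable (fun s : ℝ => (s⁻¹ : ℝ) • f ((π - t) - s)) (volume.restrict K) := by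
      refine Integrable.mono' (integrable_const (ε⁻¹ * (N ^ 3 * B)))
        ((measurable_inv.stronglyMeasurable.smul
          (hfmeas.comp_measurable (measurable_const.sub measurable_id))).aestronglyMeasurable) ?_
      refine (ae_restrict_iff' hKmeas).2 (ae_of_all _ fun s hs => ?_)
      obtain ⟨hs1, hs2⟩ := hs
      rw [norm_smul]
      have h1 : ‖(s⁻¹ : ℝ)‖ ≤ ε⁻¹ := by
        rw [Real.norm_eq_abs, abs_inv]
        exact inv_anti₀ hε hs1
      exact mul_le_mul h1 (hfle _) (norm_nonneg _) (by positivity)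
    have hper : ∀ s ∈ K, (s⁻¹ : ℝ) • ∑ k ∈ Finset.range (n + 1),
        (Complex.exp ((k : ℂ) * (t : ℂ) * Complex.I) *
          Complex.exp (-(s : ℂ) * Complex.I * ((Real.log r : ℂ) - (k : ℂ)))) • U s (x k)
        = Complex.exp ((t : ℂ) * Complex.I * (Real.log r : ℂ)) •
            U (-t) ((s⁻¹ : ℝ) • f ((π - t) - s)) := by
      intro s hs
      obtain ⟨hs1, hs2⟩ := hs
      have hsa := abs_le.1 hs2
      have hmem2 : (π - t) - s ∈ Ioo (-(2 * π)) (2 * π) :=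
        ⟨by linarith [ht.2], by linarith [ht.1]⟩
      have hUc : ∀ y : E, U (-t) (U (t + s) y) = U s y := by
        intro y
        have h1 := hgroup (-t) (t + s)
        rw [show -t + (t + s) = s from by ring] at h1
        rw [h1, ContinuousLinearMap.comp_apply]
      have hfval : f ((π - t) - s) = g (t + s) := by
        rw [hf, Set.indicator_of_mem hmem2, show π - ((π - t) - s) = t + s from by ring]
      rw [hfval, hg]
      simp only [hF]
      simp only [map_sum, ContinuousLinearMap.map_smul_of_tower, _root_.map_smul, hUc,
        Finset.smul_sum]
      refine Finset.sum_congr rfl fun k _ => ?_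
      rw [smul_comm (Complex.exp ((t : ℂ) * Complex.I * (Real.log r : ℂ))) (s⁻¹ : ℝ)]
      congr 1
      simp only [smul_smul]
      congr 1
      rw [← Complex.exp_add, ← Complex.exp_add, ← Complex.exp_add]
      congr 1
      push_cast
      ring
    calc (∫ s in K, (s⁻¹ : ℝ) • ∑ k ∈ Finset.range (n + 1),
          (Complex.exp ((k : ℂ) * (t : ℂ) * Complex.I) *
            Complex.exp (-(s : ℂ) * Complex.I * ((Real.log r : ℂ) - (k : ℂ)))) • U s (x k))
        = ∫ s in K, Complex.exp ((t : ℂ) * Complex.I * (Real.log r : ℂ)) •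
            U (-t) ((s⁻¹ : ℝ) • f ((π - t) - s)) :=
          setIntegral_congr_fun hKmeas fun s hs => hper s hs
      _ = Complex.exp ((t : ℂ) * Complex.I * (Real.log r : ℂ)) •
            U (-t) (∫ s in K, (s⁻¹ : ℝ) • f ((π - t) - s)) := by
          rw [integral_smul, ContinuousLinearMap.integral_comp_comm _ hint]
      _ = Complex.exp ((t : ℂ) * Complex.I * (Real.log r : ℂ)) • U (-t) (Hf (π - t)) := by
          rw [hHf]
  -- step 1 : bound the left-hand side by the Hilbert transform composed with t ↦ π - t
  have step1 : eLpNorm (fun t : ℝ => ∫ s in K, (s⁻¹ : ℝ) • ∑ k ∈ Finset.range (n + 1),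
        (Complex.exp ((k : ℂ) * (t : ℂ) * Complex.I) *
          Complex.exp (-(s : ℂ) * Complex.I * ((Real.log r : ℂ) - (k : ℂ)))) • U s (x k))
        q (volume.restrict (Ioo (0 : ℝ) (2 * π)))
      ≤ (Real.toNNReal (N ^ 2) : ENNReal) *
        eLpNorm (fun t : ℝ => Hf (π - t)) q (volume.restrict (Ioo (0 : ℝ) (2 * π))) := by
    refine le_trans (eLpNorm_le_nnreal_smul_eLpNorm_of_ae_le_mul ?_ q)
      (le_of_eq (by rw [ENNReal.smul_def, smul_eq_mul]))
    refine (ae_restrict_iff' measurableSet_Ioo).2 (ae_of_all _ fun t ht => ?_)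
    have hdec : ∀ z : E, ‖U (-t) z‖ ≤ N ^ 2 * ‖z‖ := by
      intro z
      have h1 := hgroup (π - t) (-π)
      rw [show π - t + -π = -t from by ring] at h1
      rw [h1, ContinuousLinearMap.comp_apply]
      calc ‖U (π - t) ((U (-π)) z)‖ ≤ N * ‖(U (-π)) z‖ :=
            hU' _ (abs_le.2 ⟨by linarith [ht.2], by linarith [ht.1]⟩) _
        _ ≤ N * (N * ‖z‖) :=
            mul_le_mul_of_nonneg_left (hU' _ (by rw [abs_neg, abs_of_pos hπ]) z) (by linarith)
        _ = N ^ 2 * ‖z‖ := by ring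
    have hnorm : ‖∫ s in K, (s⁻¹ : ℝ) • ∑ k ∈ Finset.range (n + 1),
        (Complex.exp ((k : ℂ) * (t : ℂ) * Complex.I) *
          Complex.exp (-(s : ℂ) * Complex.I * ((Real.log r : ℂ) - (k : ℂ)))) • U s (x k)‖
        ≤ N ^ 2 * ‖Hf (π - t)‖ := by
      rw [key t ht, norm_smul, hexp1 _ (by simp), one_mul]
      exact hdec _
    rw [← NNReal.coe_le_coe, NNReal.coe_mul, coe_nnnorm, coe_nnnorm,
      Real.coe_toNNReal _ (by positivity)]
    exact hnorm
  -- step 2 : change of variables t ↦ π - t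
  have step2 : eLpNorm (fun t : ℝ => Hf (π - t)) q (volume.restrict (Ioo (0 : ℝ) (2 * π)))
      = eLpNorm Hf q (volume.restrict (Ioo (-π) π)) :=
    eLpNorm_comp_measurePreserving (g := Hf) (f := fun t : ℝ => π - t)
      hHfmeas.aestronglyMeasurable hmp1
  -- step 4 : the L^p norm of f equals that of g on (-π, 3π)
  have step4 : eLpNorm f q volume = eLpNorm g q (volume.restrict (Ioo (-π) (3 * π))) := by
    rw [hf, eLpNorm_indicator_eq_eLpNorm_restrict measurableSet_Ioo]
    exact eLpNorm_comp_measurePreserving (g := g) (f := fun t : ℝ => π - t)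
      hgmeas.aestronglyMeasurable hmp2
  -- step 5 : bound g by F
  have step5 : eLpNorm g q (volume.restrict (Ioo (-π) (3 * π)))
      ≤ (Real.toNNReal (N ^ 3) : ENNReal) * eLpNorm F q (volume.restrict (Ioo (-π) (3 * π))) := by
    refine le_trans (eLpNorm_le_nnreal_smul_eLpNorm_of_ae_le_mul ?_ q)
      (le_of_eq (by rw [ENNReal.smul_def, smul_eq_mul]))
    refine (ae_restrict_iff' measurableSet_Ioo).2 (ae_of_all _ fun σ hσ => ?_)
    rw [← NNReal.coe_le_coe, NNReal.coe_mul, coe_nnnorm, coe_nnnorm,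
      Real.coe_toNNReal _ (by positivity)]
    exact hgle σ hσ
  -- step 6 : periodicity of F
  have hper2 : ∀ t : ℝ, F (t + 2 * π) = F t := by
    intro t
    rw [hF]
    refine Finset.sum_congr rfl fun k _ => ?_
    congr 1
    have h1 : ((k : ℂ) * ((t + 2 * π : ℝ) : ℂ) * Complex.I)
        = (k : ℂ) * (t : ℂ) * Complex.I + ((k : ℤ) : ℂ) * (2 * (π : ℂ) * Complex.I) := by
      push_cast
      ring
    rw [h1, Complex.exp_add, Complex.exp_int_mul_two_pi_mul_I, mul_one]
  have hper2' : ∀ t : ℝ, F (t + -(2 * π)) = F t := by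
    intro t
    have h1 := hper2 (t + -(2 * π))
    rw [show t + -(2 * π) + 2 * π = t from by ring] at h1
    exact h1.symm
  have hΦm : Measurable (fun t : ℝ => (‖F t‖₊ : ENNReal) ^ p) :=
    ((hFcont.nnnorm.measurable).coe_nnreal_ennreal).pow measurable_const
  have hshift : ∀ c : ℝ, (∀ t : ℝ, F (t + c) = F t) →
      ∫⁻ t in Ioc (0 + c) (2 * π + c), (‖F t‖₊ : ENNReal) ^ p
        = ∫⁻ t in Ioc 0 (2 * π), (‖F t‖₊ : ENNReal) ^ p := by
    intro c hc
    have hmpc : MeasurePreserving (fun t : ℝ => t + c)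
        (volume.restrict (Ioc 0 (2 * π))) (volume.restrict (Ioc (0 + c) (2 * π + c))) := by
      have h0 := (measurePreserving_add_right volume c).restrict_preimage
        (measurableSet_Ioc (a := 0 + c) (b := 2 * π + c))
      rwa [show (fun t : ℝ => t + c) ⁻¹' (Ioc (0 + c) (2 * π + c)) = Ioc 0 (2 * π) from by
        ext u
        simp only [mem_preimage, mem_Ioc]
        constructor <;> (rintro ⟨a, b⟩; constructor <;> linarith)] at h0
    rw [← hmpc.lintegral_comp hΦm]
    refine lintegral_congr fun t => ?_
    simp only [hc]
  have step6 : eLpNorm F q (volume.restrict (Ioo (-π) (3 * π)))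
      ≤ 3 * eLpNorm F q (volume.restrict (Ioo (0 : ℝ) (2 * π))) := by
    rw [eLpNorm_eq_lintegral_rpow_enorm_toReal hq0 hqt, eLpNorm_eq_lintegral_rpow_enorm_toReal hq0 hqt, hqr]
    have hIoc : ∫⁻ t in Ioo (0 : ℝ) (2 * π), (‖F t‖₊ : ENNReal) ^ p
        = ∫⁻ t in Ioc (0 : ℝ) (2 * π), (‖F t‖₊ : ENNReal) ^ p :=
      setLIntegral_congr Ioo_ae_eq_Ioc
    have hsub : Ioo (-π) (3 * π) ⊆
        (Ioc (0 + -(2 * π)) (2 * π + -(2 * π)) ∪ Ioc 0 (2 * π)) ∪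
          Ioc (0 + 2 * π) (2 * π + 2 * π) := by
      intro u hu
      simp only [mem_union, mem_Ioc]
      rcases le_or_gt u 0 with h | h
      · exact Or.inl (Or.inl ⟨by linarith [hu.1], by linarith⟩)
      · rcases le_or_gt u (2 * π) with h2 | h2
        · exact Or.inl (Or.inr ⟨h, h2⟩)
        · exact Or.inr ⟨by linarith, by linarith [hu.2]⟩
    have hcov : ∫⁻ t in Ioo (-π) (3 * π), (‖F t‖₊ : ENNReal) ^ p
        ≤ 3 * ∫⁻ t in Ioc (0 : ℝ) (2 * π), (‖F t‖₊ : ENNReal) ^ p := by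
      calc ∫⁻ t in Ioo (-π) (3 * π), (‖F t‖₊ : ENNReal) ^ p
          ≤ ∫⁻ t in (Ioc (0 + -(2 * π)) (2 * π + -(2 * π)) ∪ Ioc 0 (2 * π)) ∪
              Ioc (0 + 2 * π) (2 * π + 2 * π), (‖F t‖₊ : ENNReal) ^ p :=
            lintegral_mono_set hsub
        _ ≤ (∫⁻ t in Ioc (0 + -(2 * π)) (2 * π + -(2 * π)), (‖F t‖₊ : ENNReal) ^ p)
              + (∫⁻ t in Ioc (0 : ℝ) (2 * π), (‖F t‖₊ : ENNReal) ^ p)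
              + ∫⁻ t in Ioc (0 + 2 * π) (2 * π + 2 * π), (‖F t‖₊ : ENNReal) ^ p := by
            refine le_trans (lintegral_union_le _ _ _) ?_
            gcongr
            exact lintegral_union_le _ _ _
        _ = 3 * ∫⁻ t in Ioc (0 : ℝ) (2 * π), (‖F t‖₊ : ENNReal) ^ p := by
            rw [hshift (-(2 * π)) hper2', hshift (2 * π) hper2]
            ring
    calc (∫⁻ t in Ioo (-π) (3 * π), (‖F t‖₊ : ENNReal) ^ p) ^ (1 / p)
        ≤ (3 * ∫⁻ t in Ioo (0 : ℝ) (2 * π), (‖F t‖₊ : ENNReal) ^ p) ^ (1 / p) := by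
          refine ENNReal.rpow_le_rpow ?_ (by positivity)
          rw [hIoc]
          exact hcov
      _ = (3 : ENNReal) ^ (1 / p) *
            (∫⁻ t in Ioo (0 : ℝ) (2 * π), (‖F t‖₊ : ENNReal) ^ p) ^ (1 / p) :=
          ENNReal.mul_rpow_of_nonneg _ _ (by positivity)
      _ ≤ 3 * (∫⁻ t in Ioo (0 : ℝ) (2 * π), (‖F t‖₊ : ENNReal) ^ p) ^ (1 / p) := by
          have h3 : (3 : ENNReal) ^ (1 / p) ≤ (3 : ENNReal) ^ (1 : ℝ) := by
            refine ENNReal.rpow_le_rpow_of_exponent_le (by norm_num) ?_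
            rw [div_le_one hp0]
            linarith
          rw [ENNReal.rpow_one] at h3
          exact mul_le_mul_left h3 _
  -- assemble everything
  calc eLpNorm (fun t : ℝ => ∫ s in K, (s⁻¹ : ℝ) • ∑ k ∈ Finset.range (n + 1),
        (Complex.exp ((k : ℂ) * (t : ℂ) * Complex.I) *
          Complex.exp (-(s : ℂ) * Complex.I * ((Real.log r : ℂ) - (k : ℂ)))) • U s (x k))
        q (volume.restrict (Ioo (0 : ℝ) (2 * π)))
      ≤ (Real.toNNReal (N ^ 2) : ENNReal) *
          eLpNorm (fun t : ℝ => Hf (π - t)) q (volume.restrict (Ioo (0 : ℝ) (2 * π))) := step1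
    _ = (Real.toNNReal (N ^ 2) : ENNReal) *
          eLpNorm Hf q (volume.restrict (Ioo (-π) π)) := by rw [step2]
    _ ≤ (Real.toNNReal (N ^ 2) : ENNReal) *
          (ENNReal.ofReal CH * eLpNorm f q volume) := mul_le_mul_right hHilb' _
    _ = (Real.toNNReal (N ^ 2) : ENNReal) *
          (ENNReal.ofReal CH * eLpNorm g q (volume.restrict (Ioo (-π) (3 * π)))) := by
        rw [step4]
    _ ≤ (Real.toNNReal (N ^ 2) : ENNReal) *
          (ENNReal.ofReal CH * ((Real.toNNReal (N ^ 3) : ENNReal) *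
            eLpNorm F q (volume.restrict (Ioo (-π) (3 * π))))) := by
        exact mul_le_mul_right (mul_le_mul_right step5 _) _
    _ ≤ (Real.toNNReal (N ^ 2) : ENNReal) *
          (ENNReal.ofReal CH * ((Real.toNNReal (N ^ 3) : ENNReal) *
            (3 * eLpNorm F q (volume.restrict (Ioo (0 : ℝ) (2 * π)))))) := by
        exact mul_le_mul_right (mul_le_mul_right (mul_le_mul_right step6 _) _) _
    _ = ENNReal.ofReal (3 * CH * N ^ 5) *
          eLpNorm F q (volume.restrict (Ioo (0 : ℝ) (2 * π))) := by
        have hc2 : (Real.toNNReal (N ^ 2) : ENNReal) = ENNReal.ofReal (N ^ 2) := rfl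
        have hc3 : (Real.toNNReal (N ^ 3) : ENNReal) = ENNReal.ofReal (N ^ 3) := rfl
        have h3 : (3 : ENNReal) = ENNReal.ofReal 3 := by norm_num
        rw [hc2, hc3, h3]
        rw [show ENNReal.ofReal (N ^ 2) * (ENNReal.ofReal CH * (ENNReal.ofReal (N ^ 3) *
            (ENNReal.ofReal 3 * eLpNorm F q (volume.restrict (Ioo (0 : ℝ) (2 * π))))))
          = (ENNReal.ofReal (N ^ 2) * ENNReal.ofReal CH * ENNReal.ofReal (N ^ 3) *
            ENNReal.ofReal 3) * eLpNorm F q (volume.restrict (Ioo (0 : ℝ) (2 * π)))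
          from by ring]
        congr 1
        rw [← ENNReal.ofReal_mul (by positivity), ← ENNReal.ofReal_mul (by positivity),
          ← ENNReal.ofReal_mul (by positivity)]
        congr 1
        ring
end
end

section
/- Let E be a complex Banach space, p ∈ [1,∞) and τ > 0. For every φ ∈ [0, π/2) there exists K ≥ 1 such that for every λ ∈ Λ_φ and every g ∈ L^p((0,τ);E): (1+|λ|)·‖T_λ g‖_{L^p((0,τ);E)} ≤ K·‖g‖_{L^p((0,τ);E)}. In particular the derivative operator B = d/dt on L^p((0,τ);E) with domain {f ∈ W^{1,p}((0,τ);E) : f(0)=0} is sectorial of angle φ for every φ ∈ [0, π/2). -/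
open Complex MeasureTheory Real Set
open scoped ENNReal NNReal

noncomputable section

/-- Hölder step: `(∫ k·G)^p ≤ (∫ k)^(p-1) · ∫ k·G^p`. -/
lemma aux_holder {p : ℝ} (hp : 1 ≤ p) (μ : Measure ℝ) (k G : ℝ → ℝ≥0∞)
    (hk : AEMeasurable k μ) (hG : AEMeasurable G μ) :
    (∫⁻ x, k x * G x ∂μ) ^ p ≤ (∫⁻ x, k x ∂μ) ^ (p - 1) * ∫⁻ x, k x * G x ^ p ∂μ := by
  rcases eq_or_lt_of_le hp with h1 | h1
  · simp [← h1]
  · have hp0 : (0:ℝ) < p := by linarith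
    set q : ℝ := p / (p - 1) with hqdef
    have hpq : p.HolderConjugate q := Real.HolderConjugate.conjExponent h1
    have hf : AEMeasurable (fun x => (k x) ^ (1/p) * G x) μ :=
      ((ENNReal.continuous_rpow_const.measurable.comp_aemeasurable hk)).mul hG
    have hg : AEMeasurable (fun x => (k x) ^ (1/q)) μ :=
      ENNReal.continuous_rpow_const.measurable.comp_aemeasurable hk
    have key := ENNReal.lintegral_mul_le_Lp_mul_Lq μ hpq hf hg
    have h1p : 1/p + 1/q = 1 := by simpa [one_div] using hpq.inv_add_inv_eq_one
    have e1 : ∀ x, ((k x) ^ (1/p) * G x) * (k x) ^ (1/q) = k x * G x := by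
      intro x
      rw [mul_right_comm, ← ENNReal.rpow_add_of_nonneg _ _ (by positivity) hpq.symm.one_div_nonneg, h1p,
        ENNReal.rpow_one]
    have e2 : ∀ x, ((k x) ^ (1/p) * G x) ^ p = k x * G x ^ p := by
      intro x
      rw [ENNReal.mul_rpow_of_nonneg _ _ hp0.le, ← ENNReal.rpow_mul,
        one_div_mul_cancel hp0.ne', ENNReal.rpow_one]
    have e3 : ∀ x, ((k x) ^ (1/q)) ^ q = k x := by
      intro x
      rw [← ENNReal.rpow_mul, one_div_mul_cancel hpq.symm.pos.ne', ENNReal.rpow_one]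
    simp only [Pi.mul_apply, e1, e2, e3] at key
    calc (∫⁻ x, k x * G x ∂μ) ^ p
        ≤ ((∫⁻ x, k x * G x ^ p ∂μ) ^ (1/p) * (∫⁻ x, k x ∂μ) ^ (1/q)) ^ p :=
          ENNReal.rpow_le_rpow key hp0.le
      _ = (∫⁻ x, k x ∂μ) ^ (p-1) * ∫⁻ x, k x * G x ^ p ∂μ := by
          rw [ENNReal.mul_rpow_of_nonneg _ _ hp0.le, ← ENNReal.rpow_mul, ← ENNReal.rpow_mul,
            one_div_mul_cancel hp0.ne', ENNReal.rpow_one]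
          have : 1/q * p = p - 1 := by
            rw [hqdef]; field_simp
          rw [this, mul_comm]

/-- The exponential kernel. -/
def kfun (a : ℝ) : ℝ → ℝ≥0∞ := (Ioi (0:ℝ)).indicator fun s => ENNReal.ofReal (Real.exp (-(a*s)))

lemma kfun_measurable (a : ℝ) : Measurable (kfun a) :=
  Measurable.indicator (ENNReal.measurable_ofReal.comp ((Real.continuous_exp.measurable).comp (measurable_const.mul measurable_id).neg)) measurableSet_Ioi

lemma kfun_le_one {a : ℝ} (ha : 0 ≤ a) (s : ℝ) : kfun a s ≤ 1 := by
  unfold kfun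
  rcases le_or_gt s 0 with h | h
  · rw [indicator_of_notMem (by simp [h, not_lt.2 h])]; exact zero_le_one
  · rw [indicator_of_mem (mem_Ioi.2 h)]
    have h1 : Real.exp (-(a*s)) ≤ 1 := by
      rw [← Real.exp_zero]
      exact Real.exp_le_exp.2 (by nlinarith)
    calc ENNReal.ofReal (Real.exp (-(a*s))) ≤ ENNReal.ofReal 1 := ENNReal.ofReal_le_ofReal h1
    _ = 1 := by simp

lemma kfun_lintegral_le {a τ : ℝ} (ha : 0 ≤ a) (hτ : 0 < τ) (f : ℝ → ℝ)
    (hf : MeasurePreserving f volume volume) :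
    ∫⁻ x in Ioo (0:ℝ) τ, kfun a (f x) ≤
      min (ENNReal.ofReal τ) (ENNReal.ofReal a)⁻¹ := by
  refine le_min ?_ ?_
  · calc ∫⁻ x in Ioo (0:ℝ) τ, kfun a (f x)
        ≤ ∫⁻ _ in Ioo (0:ℝ) τ, 1 := lintegral_mono fun x => kfun_le_one ha _
    _ = volume (Ioo (0:ℝ) τ) := by simp
    _ = ENNReal.ofReal τ := by rw [Real.volume_Ioo, sub_zero]
  · rcases ha.eq_or_lt with rfl | ha'
    · simp
    · calc ∫⁻ x in Ioo (0:ℝ) τ, kfun a (f x)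
          ≤ ∫⁻ x, kfun a (f x) := lintegral_mono' Measure.restrict_le_self le_rfl
      _ = ∫⁻ s, kfun a s := hf.lintegral_comp (kfun_measurable a)
      _ = ∫⁻ s in Ioi (0:ℝ), ENNReal.ofReal (Real.exp (-(a*s))) := by
          rw [kfun, lintegral_indicator measurableSet_Ioi]
      _ = ENNReal.ofReal (∫ s in Ioi (0:ℝ), Real.exp (-(a*s))) := by
          rw [← ofReal_integral_eq_lintegral_ofReal]
          · simpa [neg_mul, IntegrableOn] using exp_neg_integrableOn_Ioi 0 ha'
          · exact ae_of_all _ fun s => (Real.exp_pos _).le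
      _ = ENNReal.ofReal a⁻¹ := by
          have := integral_comp_mul_left_Ioi (fun y => Real.exp (-y)) 0 ha'
          simp only [mul_zero, integral_exp_neg_Ioi, neg_zero, Real.exp_zero,
            smul_eq_mul, mul_one] at this
          rw [show (fun s => Real.exp (-(a*s))) = fun s => Real.exp (-(a*s)) from rfl]
          simp only [← this]
      _ = (ENNReal.ofReal a)⁻¹ := ENNReal.ofReal_inv_of_pos ha'

lemma sector_re_ge {φ : ℝ} (hφ : φ < π/2) {l : ℂ} (hl : |l.arg| ≤ φ) :
    ‖l‖ * Real.cos φ ≤ l.re := by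
  rcases eq_or_ne l 0 with rfl | hl0
  · simp
  · have harg : Real.cos (l.arg) = l.re / ‖l‖ := Complex.cos_arg hl0
    have habs : 0 < ‖l‖ := norm_pos_iff.mpr hl0
    have hcos : Real.cos φ ≤ Real.cos l.arg := by
      rw [← Real.cos_abs l.arg]
      exact Real.cos_le_cos_of_nonneg_of_le_pi (abs_nonneg _)
        (by linarith [Real.pi_pos]) hl
    have := mul_le_mul_of_nonneg_left hcos habs.le
    rwa [harg, mul_div_cancel₀ _ habs.ne'] at this

lemma core_estimate {E : Type*} [NormedAddCommGroup E] [NormedSpace ℂ E] [CompleteSpace E]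
    {p : ℝ} (hp : 1 ≤ p) {τ : ℝ} (hτ : 0 < τ) {l : ℂ} (ha : 0 ≤ l.re)
    (g' : ℝ → E) (hg' : StronglyMeasurable g') :
    eLpNorm (fun t : ℝ => ∫ x in Ioo (0 : ℝ) t,
        Complex.exp (l * ((x : ℂ) - (t : ℂ))) • g' x)
      (ENNReal.ofReal p) (volume.restrict (Ioo (0 : ℝ) τ))
    ≤ min (ENNReal.ofReal τ) (ENNReal.ofReal l.re)⁻¹ *
      eLpNorm g' (ENNReal.ofReal p) (volume.restrict (Ioo (0 : ℝ) τ)) := by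
  have hp0 : (0:ℝ) < p := lt_of_lt_of_le one_pos hp
  set a : ℝ := l.re with ha_def
  set S : Set ℝ := Ioo (0:ℝ) τ with hS
  set I : ℝ≥0∞ := min (ENNReal.ofReal τ) (ENNReal.ofReal a)⁻¹ with hI
  set G : ℝ → ℝ≥0∞ := fun x => (‖g' x‖₊ : ℝ≥0∞) with hG
  set k : ℝ → ℝ≥0∞ := kfun a with hk
  have hq0 : (ENNReal.ofReal p) ≠ 0 := by
    simp only [ne_eq, ENNReal.ofReal_eq_zero, not_le]; linarith
  have hqt : (ENNReal.ofReal p) ≠ ⊤ := ENNReal.ofReal_ne_top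
  have htoReal : (ENNReal.ofReal p).toReal = p := ENNReal.toReal_ofReal hp0.le
  have hGm : Measurable G := hg'.enorm
  have hkm : Measurable k := kfun_measurable a
  have hI_top : I ≠ ⊤ := ne_top_of_le_ne_top ENNReal.ofReal_ne_top (min_le_left _ _)
  have hI0 : I ≠ 0 := by
    refine (lt_min ?_ ?_).ne'
    · exact ENNReal.ofReal_pos.2 hτ
    · exact ENNReal.inv_pos.2 ENNReal.ofReal_ne_top
  -- kernel bounds
  have hbound1 : ∀ t : ℝ, ∫⁻ x in S, k (t - x) ≤ I := by
    intro t
    have hmp : MeasurePreserving (fun x : ℝ => t - x) volume volume := by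
      have h := (MeasureTheory.measurePreserving_add_right (volume : Measure ℝ) t).comp
        (Measure.measurePreserving_neg (volume : Measure ℝ))
      simpa [Function.comp_def, sub_eq_neg_add] using h
    exact kfun_lintegral_le ha hτ _ hmp
  have hbound2 : ∀ x : ℝ, ∫⁻ t in S, k (t - x) ≤ I := fun x =>
    kfun_lintegral_le ha hτ _ (MeasureTheory.measurePreserving_sub_right volume x)
  -- Step 1: pointwise bound on the norm of the integral
  have step1 : ∀ t ∈ S, (‖∫ x in Ioo (0:ℝ) t, Complex.exp (l * ((x:ℂ) - (t:ℂ))) • g' x‖₊ : ℝ≥0∞)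
      ≤ ∫⁻ x in S, k (t - x) * G x := by
    intro t ht
    calc (‖∫ x in Ioo (0:ℝ) t, Complex.exp (l * ((x:ℂ) - (t:ℂ))) • g' x‖₊ : ℝ≥0∞)
        ≤ ∫⁻ x in Ioo (0:ℝ) t, ‖Complex.exp (l * ((x:ℂ) - (t:ℂ))) • g' x‖₊ :=
          enorm_integral_le_lintegral_enorm _
      _ = ∫⁻ x in Ioo (0:ℝ) t, k (t - x) * G x := by
          refine setLIntegral_congr_fun measurableSet_Ioo (fun x hx => ?_)
          have hx1 : 0 < t - x := sub_pos.2 hx.2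
          have hre : (l * ((x:ℂ) - (t:ℂ))).re = -(a * (t - x)) := by
            simp [Complex.mul_re]; ring
          rw [nnnorm_smul, ENNReal.coe_mul, hk, kfun, indicator_of_mem (mem_Ioi.2 hx1)]
          congr 1
          rw [← ENNReal.ofReal_coe_nnreal, coe_nnnorm, Complex.norm_exp, hre]
      _ ≤ ∫⁻ x in S, k (t - x) * G x :=
          lintegral_mono_set (Ioo_subset_Ioo le_rfl ht.2.le)
  -- Step 2: main lintegral estimate
  have main : ∫⁻ t in S, (∫⁻ x in S, k (t - x) * G x) ^ p
      ≤ I ^ p * ∫⁻ x in S, G x ^ p := by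
    calc ∫⁻ t in S, (∫⁻ x in S, k (t - x) * G x) ^ p
        ≤ ∫⁻ t in S, I ^ (p-1) * ∫⁻ x in S, k (t - x) * G x ^ p := by
          refine lintegral_mono fun t => ?_
          refine le_trans (aux_holder hp _ _ _
            ((hkm.comp (measurable_const.sub measurable_id)).aemeasurable)
            hGm.aemeasurable) ?_
          exact mul_le_mul_left (ENNReal.rpow_le_rpow (hbound1 t) (by linarith)) _
      _ = I ^ (p-1) * ∫⁻ t in S, ∫⁻ x in S, k (t - x) * G x ^ p :=
          (lintegral_const_mul' (I ^ (p-1)) _ (ENNReal.rpow_ne_top_of_nonneg (y := p - 1) (by linarith) hI_top))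
      _ = I ^ (p-1) * ∫⁻ x in S, ∫⁻ t in S, k (t - x) * G x ^ p := by
          congr 1
          exact lintegral_lintegral_swap
            ((hkm.comp (measurable_fst.sub measurable_snd)).mul
              (ENNReal.continuous_rpow_const.measurable.comp
                (hGm.comp measurable_snd))).aemeasurable
      _ ≤ I ^ (p-1) * ∫⁻ x in S, I * G x ^ p := by
          refine mul_le_mul_right (lintegral_mono fun x => ?_) _
          rw [lintegral_mul_const' (G x ^ p) _
            (ENNReal.rpow_ne_top_of_nonneg hp0.le ENNReal.coe_ne_top)]
          exact mul_le_mul_left (hbound2 x) _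
      _ = I ^ (p-1) * (I * ∫⁻ x in S, G x ^ p) := by
          rw [lintegral_const_mul' _ _ hI_top]
      _ = I ^ p * ∫⁻ x in S, G x ^ p := by
          rw [← mul_assoc]
          congr 1
          nth_rewrite 2 [← ENNReal.rpow_one I]
          rw [← ENNReal.rpow_add _ _ hI0 hI_top]
          norm_num
  -- Step 3: assemble
  rw [eLpNorm_eq_lintegral_rpow_enorm_toReal hq0 hqt, eLpNorm_eq_lintegral_rpow_enorm_toReal hq0 hqt, htoReal]
  calc (∫⁻ t in S, (‖∫ x in Ioo (0:ℝ) t, Complex.exp (l * ((x:ℂ) - (t:ℂ))) • g' x‖₊ : ℝ≥0∞) ^ p)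
        ^ (1/p)
      ≤ (∫⁻ t in S, (∫⁻ x in S, k (t - x) * G x) ^ p) ^ (1/p) := by
        refine ENNReal.rpow_le_rpow (lintegral_mono_ae ?_) (by positivity)
        filter_upwards [self_mem_ae_restrict measurableSet_Ioo] with t ht
        exact ENNReal.rpow_le_rpow (step1 t ht) hp0.le
    _ ≤ (I ^ p * ∫⁻ x in S, G x ^ p) ^ (1/p) := ENNReal.rpow_le_rpow main (by positivity)
    _ = I * (∫⁻ x in S, G x ^ p) ^ (1/p) := by
        rw [ENNReal.mul_rpow_of_nonneg _ _ (by positivity), ← ENNReal.rpow_mul,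
          mul_one_div_cancel hp0.ne', ENNReal.rpow_one]
    _ = I * (∫⁻ x in S, (‖g' x‖₊ : ℝ≥0∞) ^ p) ^ (1/p) := rfl

/-- sectoriality of the derivative operator, Section 3: for every
`φ ∈ [0, π/2)` there is `K ≥ 1` such that for all `λ ∈ Λ_φ` and `g ∈ L^p(0,τ;E)`,
`(1+|λ|)‖T_λ g‖_{L^p} ≤ K ‖g‖_{L^p}`, where `(T_λ g)(t) = ∫_0^t e^{λ(x-t)} g(x) dx` is the
resolvent `(B+λ)⁻¹` of the derivative operator `B = d/dt` with domain
`{f ∈ W^{1,p}(0,τ;E) : f(0) = 0}`; hence `B` is sectorial of every angle `φ < π/2`. -/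
theorem derivative_operator_sectorial
    {E : Type*} [NormedAddCommGroup E] [NormedSpace ℂ E] [CompleteSpace E]
    (p : ℝ) (hp : 1 ≤ p) (τ : ℝ) (hτ : 0 < τ) :
    ∀ φ : ℝ, 0 ≤ φ → φ < π / 2 → ∃ K : ℝ, 1 ≤ K ∧
      ∀ l ∈ SectorSet φ, ∀ g : ℝ → E,
        MemLp g (ENNReal.ofReal p) (volume.restrict (Ioo (0 : ℝ) τ)) →
        ENNReal.ofReal (1 + ‖l‖) *
            eLpNorm (fun t : ℝ => ∫ x in Ioo (0 : ℝ) t,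
                Complex.exp (l * ((x : ℂ) - (t : ℂ))) • g x)
              (ENNReal.ofReal p) (volume.restrict (Ioo (0 : ℝ) τ))
          ≤ ENNReal.ofReal K * eLpNorm g (ENNReal.ofReal p) (volume.restrict (Ioo (0 : ℝ) τ)) := by
  intro φ hφ0 hφ
  have hc0 : 0 < Real.cos φ := Real.cos_pos_of_mem_Ioo ⟨by linarith [Real.pi_pos], hφ⟩
  refine ⟨max 1 (τ + (Real.cos φ)⁻¹), le_max_left _ _, ?_⟩
  intro l hl g hg
  have hmeas := hg.1
  set g' : ℝ → E := hmeas.mk g with hg'def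
  have hg'sm : StronglyMeasurable g' := hmeas.stronglyMeasurable_mk
  have hgg' : g =ᵐ[volume.restrict (Ioo (0:ℝ) τ)] g' := hmeas.ae_eq_mk
  have hT_ae : (fun t : ℝ => ∫ x in Ioo (0:ℝ) t, Complex.exp (l * ((x:ℂ)-(t:ℂ))) • g x)
      =ᵐ[volume.restrict (Ioo (0:ℝ) τ)]
      (fun t : ℝ => ∫ x in Ioo (0:ℝ) t, Complex.exp (l * ((x:ℂ)-(t:ℂ))) • g' x) := by
    filter_upwards [self_mem_ae_restrict measurableSet_Ioo] with t ht
    refine integral_congr_ae ?_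
    have h2 : ∀ᵐ x ∂(volume.restrict (Ioo (0:ℝ) t)), g x = g' x :=
      ae_restrict_of_ae_restrict_of_subset (Ioo_subset_Ioo le_rfl ht.2.le) hgg'
    filter_upwards [h2] with x hx
    rw [hx]
  rw [eLpNorm_congr_ae hT_ae, eLpNorm_congr_ae hgg']
  have hre : ‖l‖ * Real.cos φ ≤ l.re := sector_re_ge hφ hl
  have ha0 : 0 ≤ l.re := le_trans (by positivity) hre
  have key := core_estimate hp hτ ha0 g' hg'sm
  set I : ℝ≥0∞ := min (ENNReal.ofReal τ) (ENNReal.ofReal l.re)⁻¹ with hIdef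
  have hfin : ENNReal.ofReal (1 + ‖l‖) * I
      ≤ ENNReal.ofReal (max 1 (τ + (Real.cos φ)⁻¹)) := by
    have hτK : ENNReal.ofReal (τ + (Real.cos φ)⁻¹)
        ≤ ENNReal.ofReal (max 1 (τ + (Real.cos φ)⁻¹)) :=
      ENNReal.ofReal_le_ofReal (le_max_right _ _)
    rcases eq_or_ne l 0 with rfl | hl0
    · simp only [norm_zero, add_zero, ENNReal.ofReal_one, one_mul]
      refine le_trans (min_le_left _ _) (le_trans ?_ hτK)
      exact ENNReal.ofReal_le_ofReal (by simp [le_add_iff_nonneg_right, inv_nonneg, hc0.le])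
    · have habs : 0 < ‖l‖ := norm_pos_iff.mpr hl0
      have ha : 0 < l.re := lt_of_lt_of_le (by positivity) hre
      have hstep : ‖l‖ * (l.re)⁻¹ ≤ (Real.cos φ)⁻¹ := by
        have h1 : (l.re)⁻¹ ≤ (‖l‖ * Real.cos φ)⁻¹ :=
          inv_anti₀ (by positivity) hre
        calc ‖l‖ * (l.re)⁻¹ ≤ ‖l‖ * (‖l‖ * Real.cos φ)⁻¹ :=
              mul_le_mul_of_nonneg_left h1 habs.le
          _ = (Real.cos φ)⁻¹ := by field_simp
      calc ENNReal.ofReal (1 + ‖l‖) * I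
          = (ENNReal.ofReal 1 + ENNReal.ofReal (‖l‖)) * I := by
            rw [ENNReal.ofReal_add zero_le_one (by positivity)]
        _ = ENNReal.ofReal 1 * I + ENNReal.ofReal (‖l‖) * I := add_mul _ _ _
        _ ≤ 1 * ENNReal.ofReal τ + ENNReal.ofReal (‖l‖) * ENNReal.ofReal (l.re)⁻¹ := by
            refine add_le_add (by rw [ENNReal.ofReal_one]; exact mul_le_mul_right (min_le_left _ _) _) ?_
            refine mul_le_mul_right (le_trans (min_le_right _ _) ?_) _
            rw [ENNReal.ofReal_inv_of_pos ha]
        _ = ENNReal.ofReal τ + ENNReal.ofReal (‖l‖ * (l.re)⁻¹) := by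
            rw [one_mul, ENNReal.ofReal_mul habs.le]
        _ ≤ ENNReal.ofReal τ + ENNReal.ofReal (Real.cos φ)⁻¹ :=
            add_le_add le_rfl (ENNReal.ofReal_le_ofReal hstep)
        _ = ENNReal.ofReal (τ + (Real.cos φ)⁻¹) := (ENNReal.ofReal_add hτ.le (by positivity)).symm
        _ ≤ _ := hτK
  calc ENNReal.ofReal (1 + ‖l‖) *
        eLpNorm (fun t : ℝ => ∫ x in Ioo (0:ℝ) t, Complex.exp (l * ((x:ℂ)-(t:ℂ))) • g' x)
          (ENNReal.ofReal p) (volume.restrict (Ioo (0:ℝ) τ))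
      ≤ ENNReal.ofReal (1 + ‖l‖) *
        (I * eLpNorm g' (ENNReal.ofReal p) (volume.restrict (Ioo (0:ℝ) τ))) :=
        mul_le_mul_right key _
    _ = (ENNReal.ofReal (1 + ‖l‖) * I) *
        eLpNorm g' (ENNReal.ofReal p) (volume.restrict (Ioo (0:ℝ) τ)) := (mul_assoc _ _ _).symm
    _ ≤ ENNReal.ofReal (max 1 (τ + (Real.cos φ)⁻¹)) *
        eLpNorm g' (ENNReal.ofReal p) (volume.restrict (Ioo (0:ℝ) τ)) :=
        mul_le_mul_left hfin _
end
end

section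
/- Let H be a complex Hilbert space and let A be sectorial of angle θ ∈ [0,π) with constant K. Then for every φ ∈ [−θ,θ], every r ∈ [1/e,1], every n ∈ ℕ and all x_0,…,x_n ∈ H: ‖t ↦ Σ_{k=0}^n e^{ikt}(I + re^{−k}e^{iφ}A)^{−1} x_k‖_{L²((0,2π);H)} ≤ K ‖t ↦ Σ_{k=0}^n e^{ikt} x_k‖_{L²((0,2π);H)}. In particular, on a Hilbert space every sectorial operator of angle θ is T*-sectorial of angle θ with exponent 2, with the choice a_k(t) = e^{ikt}. -/
open Complex MeasureTheory Real Set Filter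

noncomputable section

variable {E : Type*} [NormedAddCommGroup E] [NormedSpace ℂ E] [CompleteSpace E]

open scoped InnerProductSpace

section Aux

lemma tstar_exp_orth (j k : ℕ) :
    ∫ t in Ioo (0:ℝ) (2*π), Complex.exp ((((k:ℂ)-(j:ℂ)) * Complex.I) * (t:ℝ)) =
      if j = k then ((2*π : ℝ) : ℂ) else 0 := by
  rcases eq_or_ne j k with h | h
  · subst h
    simp [Real.volume_Ioo, ENNReal.toReal_ofReal Real.two_pi_pos.le, max_eq_left Real.two_pi_pos.le]
  · have hc : ((k:ℂ)-(j:ℂ)) * Complex.I ≠ 0 := by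
      apply mul_ne_zero _ Complex.I_ne_zero
      rw [sub_ne_zero]
      exact_mod_cast (Ne.symm h)
    rw [if_neg h, ← MeasureTheory.integral_Ioc_eq_integral_Ioo,
      ← intervalIntegral.integral_of_le Real.two_pi_pos.le,
      integral_exp_mul_complex hc]
    have h1 : (((k:ℂ)-(j:ℂ)) * Complex.I) * ((2*π:ℝ):ℂ)
        = ((k:ℤ)-(j:ℤ) : ℤ) * (2*(π:ℂ) * Complex.I) := by
      push_cast; ring
    rw [h1, Complex.exp_int_mul_two_pi_mul_I]
    simp

lemma tstar_intOn {α : Type*} [NormedAddCommGroup α] [NormedSpace ℂ α] {f : ℝ → α}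
    (hf : Continuous f) : IntegrableOn f (Ioo (0:ℝ) (2*π)) volume :=
  (hf.integrableOn_Icc).mono_set Set.Ioo_subset_Icc_self

variable {H : Type*} [NormedAddCommGroup H] [InnerProductSpace ℂ H] [CompleteSpace H]

omit [CompleteSpace H] in
lemma tstar_parseval (n : ℕ) (y : ℕ → H) :
    ∫ t in Ioo (0:ℝ) (2*π), ‖∑ k ∈ Finset.range (n+1),
        Complex.exp ((k:ℂ) * (t:ℂ) * Complex.I) • y k‖ ^ 2 =
      2*π * ∑ k ∈ Finset.range (n+1), ‖y k‖^2 := by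
  set e : ℕ → ℝ → ℂ := fun k t => Complex.exp ((k:ℂ) * (t:ℂ) * Complex.I) with he
  have hecont : ∀ k, Continuous (e k) := by
    intro k; apply Complex.continuous_exp.comp; fun_prop
  set f : ℝ → H := fun t => ∑ k ∈ Finset.range (n+1), e k t • y k with hf
  have hfcont : Continuous f := by
    apply continuous_finset_sum; intro k _; exact (hecont k).smul continuous_const
  have hinner : ∀ t : ℝ, (⟪f t, f t⟫_ℂ) = ∑ j ∈ Finset.range (n+1), ∑ k ∈ Finset.range (n+1),
      Complex.exp ((((k:ℂ)-(j:ℂ)) * Complex.I) * (t:ℝ)) * ⟪y j, y k⟫_ℂ := by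
    intro t
    rw [hf, sum_inner]
    refine Finset.sum_congr rfl fun j _ => ?_
    rw [inner_sum]
    refine Finset.sum_congr rfl fun k _ => ?_
    rw [inner_smul_left, inner_smul_right, ← mul_assoc]
    congr 1
    rw [he]
    simp only [← Complex.exp_conj, map_mul, Complex.conj_I, Complex.conj_ofReal, map_natCast]
    rw [← Complex.exp_add]
    congr 1
    ring
  have hkey : ∫ t in Ioo (0:ℝ) (2*π), (⟪f t, f t⟫_ℂ) =
      ((2*π:ℝ):ℂ) * ∑ k ∈ Finset.range (n+1), ⟪y k, y k⟫_ℂ := by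
    rw [MeasureTheory.setIntegral_congr_fun measurableSet_Ioo (fun t _ => hinner t)]
    rw [MeasureTheory.integral_finset_sum]
    · have : ∀ j ∈ Finset.range (n+1),
          (∫ t in Ioo (0:ℝ) (2*π), ∑ k ∈ Finset.range (n+1),
            Complex.exp ((((k:ℂ)-(j:ℂ)) * Complex.I) * (t:ℝ)) * ⟪y j, y k⟫_ℂ)
          = ((2*π:ℝ):ℂ) * ⟪y j, y j⟫_ℂ := by
        intro j hj
        rw [MeasureTheory.integral_finset_sum]
        · have h2 : ∀ k ∈ Finset.range (n+1),
              (∫ t in Ioo (0:ℝ) (2*π),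
                Complex.exp ((((k:ℂ)-(j:ℂ)) * Complex.I) * (t:ℝ)) * ⟪y j, y k⟫_ℂ)
              = (if j = k then ((2*π:ℝ):ℂ) else 0) * ⟪y j, y k⟫_ℂ := by
            intro k _
            have := integral_smul_const (μ := volume.restrict (Ioo (0:ℝ) (2*π)))
              (f := fun t : ℝ => Complex.exp ((((k:ℂ)-(j:ℂ)) * Complex.I) * (t:ℝ)))
              (⟪y j, y k⟫_ℂ)
            simp only [smul_eq_mul] at this
            rw [this, tstar_exp_orth]
          rw [Finset.sum_congr rfl h2]
          simp [ite_mul, Finset.sum_ite_eq, hj]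
        · intro k _
          exact tstar_intOn ((Complex.continuous_exp.comp (by fun_prop)).mul continuous_const)
      rw [Finset.sum_congr rfl this, ← Finset.mul_sum]
    · intro j _
      apply tstar_intOn
      apply continuous_finset_sum
      intro k _
      exact (Complex.continuous_exp.comp (by fun_prop)).mul continuous_const
  have hre : ∀ t : ℝ, ‖f t‖^2 = (⟪f t, f t⟫_ℂ).re :=
    fun t => (inner_self_eq_norm_sq (𝕜 := ℂ) (f t)).symm
  calc ∫ t in Ioo (0:ℝ) (2*π), ‖f t‖^2
      = ∫ t in Ioo (0:ℝ) (2*π), (⟪f t, f t⟫_ℂ).re :=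
        MeasureTheory.setIntegral_congr_fun measurableSet_Ioo (fun t _ => hre t)
    _ = (∫ t in Ioo (0:ℝ) (2*π), (⟪f t, f t⟫_ℂ)).re := by
        rw [← RCLike.re_eq_complex_re, ← integral_re (tstar_intOn (f := fun t => ⟪f t, f t⟫_ℂ) (hfcont.inner hfcont)).integrable]
    _ = 2*π * ∑ k ∈ Finset.range (n+1), ‖y k‖^2 := by
        rw [hkey]
        simp only [Complex.mul_re, Complex.ofReal_re, Complex.ofReal_im,
          zero_mul, sub_zero, Complex.re_sum]
        congr 1
        refine Finset.sum_congr rfl fun k _ => ?_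
        rw [← RCLike.re_eq_complex_re]
        exact inner_self_eq_norm_sq (y k)

lemma tstar_sector_mem {θ φ r : ℝ} (hθπ : θ < π) (hφ : |φ| ≤ θ) (hr : 0 < r) :
    (((r : ℝ) : ℂ) * Complex.exp ((φ:ℂ)*Complex.I))⁻¹ ∈ SectorSet θ := by
  have hφπ : -φ ∈ Set.Ioc (-π) π := by
    constructor
    · nlinarith [abs_le.1 hφ, hθπ]
    · nlinarith [abs_le.1 hφ, hθπ]
  have h1 : (((r : ℝ) : ℂ) * Complex.exp ((φ:ℂ)*Complex.I))⁻¹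
      = ((r⁻¹ : ℝ) : ℂ) * (Complex.cos (-φ) + Complex.sin (-φ) * Complex.I) := by
    rw [mul_inv, ← Complex.exp_neg]
    push_cast
    rw [show -((φ:ℂ)*Complex.I) = ((-φ:ℝ):ℂ) * Complex.I by push_cast; ring,
      Complex.exp_mul_I]
    norm_num
  rw [SectorSet, Set.mem_setOf_eq, h1]
  rw [show (Complex.cos (-(φ:ℂ)) + Complex.sin (-(φ:ℂ)) * Complex.I)
        = (Complex.cos (((-φ:ℝ)):ℂ) + Complex.sin (((-φ:ℝ)):ℂ) * Complex.I) by push_cast; ring]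
  rw [Complex.arg_real_mul _ (by positivity : (0:ℝ) < r⁻¹)]
  rw [Complex.arg_cos_add_sin_mul_I hφπ]
  rwa [abs_neg]

omit [CompleteSpace E] in
lemma tstar_resolventI_bound {D : Submodule ℂ E} {A : D →ₗ[ℂ] E} {θ K : ℝ}
    {R : ℂ → E →L[ℂ] E} (hsec : SectorialWith D A θ K R) {μ : ℂ}
    (hμ : μ⁻¹ ∈ SectorSet θ) (u : E) :
    ‖resolventI R μ u‖ ≤ K * ‖u‖ := by
  have hb := (hsec.2.2.2 μ⁻¹ hμ).2 u
  calc ‖resolventI R μ u‖ = ‖μ⁻¹‖ * ‖R μ⁻¹ u‖ := by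
        rw [resolventI]; simp [norm_smul]
    _ ≤ (1 + ‖μ⁻¹‖) * ‖R μ⁻¹ u‖ := by
        apply mul_le_mul_of_nonneg_right _ (norm_nonneg _)
        linarith
    _ ≤ K * ‖u‖ := hb

lemma tstar_eLpNorm_exp_sum (n : ℕ) (y : ℕ → H) :
    eLpNorm (fun t : ℝ => ∑ k ∈ Finset.range (n+1),
        Complex.exp ((k:ℂ) * (t:ℂ) * Complex.I) • y k) 2 (volume.restrict (Ioo (0:ℝ) (2*π)))
      = ENNReal.ofReal ((2*π * ∑ k ∈ Finset.range (n+1), ‖y k‖^2) ^ (2⁻¹ : ℝ)) := by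
  haveI : IsFiniteMeasure (volume.restrict (Ioo (0:ℝ) (2*π))) :=
    ⟨by rw [Measure.restrict_apply_univ]; simp [Real.volume_Ioo]; exact ENNReal.mul_lt_top (by simp) ENNReal.ofReal_lt_top⟩
  set f : ℝ → H := fun t => ∑ k ∈ Finset.range (n+1),
    Complex.exp ((k:ℂ) * (t:ℂ) * Complex.I) • y k with hfdef
  have hfcont : Continuous f := by
    apply continuous_finset_sum; intro k _
    exact (Complex.continuous_exp.comp (by fun_prop)).smul continuous_const
  have hbd : ∀ t : ℝ, ‖f t‖ ≤ ∑ k ∈ Finset.range (n+1), ‖y k‖ := by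
    intro t
    refine (norm_sum_le _ _).trans (Finset.sum_le_sum fun k _ => ?_)
    rw [norm_smul, show (k:ℂ)*(t:ℂ)*Complex.I = (((k*t:ℝ)):ℂ)*Complex.I by push_cast; ring,
      Complex.norm_exp_ofReal_mul_I, one_mul]
  have hmem : MemLp f 2 (volume.restrict (Ioo (0:ℝ) (2*π))) :=
    MemLp.of_bound hfcont.aestronglyMeasurable _ (ae_of_all _ hbd)
  rw [hmem.eLpNorm_eq_integral_rpow_norm two_ne_zero ENNReal.ofNat_ne_top]
  have ht : (2:ENNReal).toReal = 2 := by norm_num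
  rw [ht]
  congr 2
  rw [show (∫ a in Ioo (0:ℝ) (2*π), ‖f a‖ ^ (2:ℝ)) = ∫ a in Ioo (0:ℝ) (2*π), ‖f a‖ ^ (2:ℕ) by
      refine MeasureTheory.setIntegral_congr_fun measurableSet_Ioo (fun t _ => ?_)
      rw [← Real.rpow_natCast]; norm_num]
  exact tstar_parseval n y

end Aux

/-- Corollary 3.4, first part: on a Hilbert space every sectorial operator
of angle `θ` with constant `K` satisfies, for all `φ ∈ [-θ,θ]`, `r ∈ [1/e,1]` and
`x_0, …, x_n ∈ H`,
`‖t ↦ Σ_k e^{ikt}(I + re^{-k}e^{iφ}A)⁻¹x_k‖_{L²(0,2π;H)} ≤ K ‖t ↦ Σ_k e^{ikt}x_k‖_{L²(0,2π;H)}`;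
in particular it is `T*`-sectorial of angle `θ` with exponent `2` and `a_k(t) = e^{ikt}`. -/
theorem hilbert_sectorial_TStar
    {H : Type*} [NormedAddCommGroup H] [InnerProductSpace ℂ H] [CompleteSpace H]
    (D : Submodule ℂ H) (A : D →ₗ[ℂ] H) (θ K : ℝ) (R : ℂ → H →L[ℂ] H)
    (hθ0 : 0 ≤ θ) (hθπ : θ < π) (hsec : SectorialWith D A θ K R) :
    ∀ φ : ℝ, |φ| ≤ θ → ∀ r : ℝ, Real.exp (-1) ≤ r → r ≤ 1 → ∀ n : ℕ, ∀ x : ℕ → H,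
      eLpNorm (fun t : ℝ => ∑ k ∈ Finset.range (n + 1),
          Complex.exp ((k : ℂ) * (t : ℂ) * Complex.I) •
            resolventI R (((r * Real.exp (-(k : ℝ)) : ℝ) : ℂ) *
              Complex.exp ((φ : ℂ) * Complex.I)) (x k))
        (2 : ENNReal) (volume.restrict (Ioo (0 : ℝ) (2 * π)))
      ≤ ENNReal.ofReal K *
        eLpNorm (fun t : ℝ => ∑ k ∈ Finset.range (n + 1),
            Complex.exp ((k : ℂ) * (t : ℂ) * Complex.I) • x k)
          (2 : ENNReal) (volume.restrict (Ioo (0 : ℝ) (2 * π))) := by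
  intro φ hφ r hr1 hr2 n x
  have hK0 : (0:ℝ) ≤ K := le_trans zero_le_one hsec.1
  have hr0 : 0 < r := lt_of_lt_of_le (Real.exp_pos _) hr1
  have hBk : ∀ k : ℕ, ‖resolventI R (((r * Real.exp (-(k:ℝ)) : ℝ) : ℂ) *
      Complex.exp ((φ:ℂ)*Complex.I)) (x k)‖ ≤ K * ‖x k‖ := by
    intro k
    apply tstar_resolventI_bound hsec
    exact tstar_sector_mem hθπ hφ (by positivity)
  rw [tstar_eLpNorm_exp_sum, tstar_eLpNorm_exp_sum, ← ENNReal.ofReal_mul hK0]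
  apply ENNReal.ofReal_le_ofReal
  set S := ∑ k ∈ Finset.range (n+1), ‖x k‖^2 with hS
  have hS0 : 0 ≤ S := Finset.sum_nonneg fun k _ => sq_nonneg _
  have hT0 : 0 ≤ ∑ k ∈ Finset.range (n+1), ‖resolventI R (((r * Real.exp (-(k:ℝ)) : ℝ) : ℂ) *
      Complex.exp ((φ:ℂ)*Complex.I)) (x k)‖^2 := Finset.sum_nonneg fun k _ => sq_nonneg _
  have h1 : 2*π * ∑ k ∈ Finset.range (n+1), ‖resolventI R (((r * Real.exp (-(k:ℝ)) : ℝ) : ℂ) *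
      Complex.exp ((φ:ℂ)*Complex.I)) (x k)‖^2 ≤ K^2 * (2*π*S) := by
    have hterm : ∑ k ∈ Finset.range (n+1), ‖resolventI R (((r * Real.exp (-(k:ℝ)) : ℝ) : ℂ) *
        Complex.exp ((φ:ℂ)*Complex.I)) (x k)‖^2 ≤ K^2 * S := by
      rw [hS, Finset.mul_sum]
      refine Finset.sum_le_sum fun k _ => ?_
      calc ‖resolventI R (((r * Real.exp (-(k:ℝ)) : ℝ) : ℂ) *
            Complex.exp ((φ:ℂ)*Complex.I)) (x k)‖^2 ≤ (K * ‖x k‖)^2 :=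
          pow_le_pow_left₀ (norm_nonneg _) (hBk k) 2
        _ = K^2 * ‖x k‖^2 := by ring
    nlinarith [Real.two_pi_pos]
  calc (2*π * ∑ k ∈ Finset.range (n+1), ‖resolventI R (((r * Real.exp (-(k:ℝ)) : ℝ) : ℂ) *
        Complex.exp ((φ:ℂ)*Complex.I)) (x k)‖^2) ^ (2⁻¹:ℝ)
      ≤ (K^2 * (2*π*S)) ^ (2⁻¹:ℝ) := by
        apply Real.rpow_le_rpow _ h1 (by norm_num)
        have := Real.two_pi_pos
        positivity
    _ = K * (2*π*S) ^ (2⁻¹:ℝ) := by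
        rw [Real.mul_rpow (by positivity) (by positivity)]
        congr 1
        rw [← Real.rpow_natCast K 2, ← Real.rpow_mul hK0]
        norm_num
end
end
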